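/- arXiv:1605.04489 — 3 statements merged into one kernel-verified Lean document; each statement's English description precedes it below -/
import Mathlib

section
/- For the flat distributive law Λ† of the double copresheaf 2-monad 𝔓†𝔓 over the presheaf 2-monad 𝔓 given by Λ†_X = (y_X^!)^{†!}·y_{P†PPX}:P†PPX→P(P†PX), there is a 2-isomorphism (Λ†,Q)-Alg ≅ Q-Cls: lax Λ†-algebra structures p:P†PX→PX on a Q-category X correspond bijectively to Q-closure operations on PX, and lax Λ†-homomorphisms correspond exactly to the continuous Q-functors between Q-closure spaces. -/
/-!
Common framework: quantaloids, `Q`-categories, `Q`-functors, `Q`-distributors,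
(co)presheaf constructions, 2-monads on `Q`-Cat, lax distributive laws over the
presheaf 2-monad, and lax extensions to `Q`-Dist.
-/

set_option autoImplicit false

universe u

namespace QT

/-- A (small) quantaloid: a category enriched in complete lattices, with
composition preserving suprema in each variable. -/
structure Quantaloid : Type (u + 1) where
  Obj : Type u
  Hom : Obj → Obj → Type u
  lat : ∀ a b, CompleteLattice (Hom a b)
  comp : ∀ {a b c}, Hom b c → Hom a b → Hom a c
  idm : ∀ a, Hom a a
  comp_assoc : ∀ {a b c d} (w : Hom c d) (v : Hom b c) (u : Hom a b),
    comp (comp w v) u = comp w (comp v u)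
  comp_idm : ∀ {a b} (u : Hom a b), comp u (idm a) = u
  idm_comp : ∀ {a b} (u : Hom a b), comp (idm b) u = u
  comp_sSup : ∀ {a b c} (v : Hom b c) (S : Set (Hom a b)),
    comp v (sSup S) = ⨆ u ∈ S, comp v u
  sSup_comp : ∀ {a b c} (S : Set (Hom b c)) (u : Hom a b),
    comp (sSup S) u = ⨆ v ∈ S, comp v u

attribute [instance] Quantaloid.lat

namespace Quantaloid

variable {Q : Quantaloid.{u}}

theorem comp_iSup {a b c : Q.Obj} (v : Q.Hom b c) {ι : Sort*} (f : ι → Q.Hom a b) :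
    Q.comp v (⨆ i, f i) = ⨆ i, Q.comp v (f i) := by
  rw [iSup, Q.comp_sSup, iSup_range]

theorem iSup_comp {a b c : Q.Obj} {ι : Sort*} (f : ι → Q.Hom b c) (u : Q.Hom a b) :
    Q.comp (⨆ i, f i) u = ⨆ i, Q.comp (f i) u := by
  rw [iSup, Q.sSup_comp, iSup_range]

theorem comp_le_comp {a b c : Q.Obj} {v v' : Q.Hom b c} {u u' : Q.Hom a b}
    (hv : v ≤ v') (hu : u ≤ u') : Q.comp v u ≤ Q.comp v' u' := by
  have h1 : Q.comp v' u ≤ Q.comp v' u' := by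
    have h := Q.comp_sSup v' {u, u'}
    rw [sSup_pair, sup_eq_right.mpr hu] at h
    rw [h]
    exact le_biSup (fun x => Q.comp v' x) (Set.mem_insert _ _)
  have h2 : Q.comp v u ≤ Q.comp v' u := by
    have h := Q.sSup_comp {v, v'} u
    rw [sSup_pair, sup_eq_right.mpr hv] at h
    rw [h]
    exact le_biSup (fun x => Q.comp x u) (Set.mem_insert _ _)
  exact le_trans h2 h1

/-- Internal hom `w ↙ u` (right adjoint to `- ∘ u`). -/
def lda {a b c : Q.Obj} (w : Q.Hom a c) (u : Q.Hom a b) : Q.Hom b c :=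
  sSup {v | Q.comp v u ≤ w}

/-- Internal hom `v ↘ w` (right adjoint to `v ∘ -`). -/
def rda {a b c : Q.Obj} (v : Q.Hom b c) (w : Q.Hom a c) : Q.Hom a b :=
  sSup {u | Q.comp v u ≤ w}

theorem le_lda {a b c : Q.Obj} {v : Q.Hom b c} {u : Q.Hom a b} {w : Q.Hom a c} :
    Q.comp v u ≤ w ↔ v ≤ lda w u := by
  constructor
  · exact fun h => le_sSup h
  · intro h
    calc Q.comp v u ≤ Q.comp (lda w u) u := comp_le_comp h le_rfl
      _ ≤ w := by
          rw [lda, Q.sSup_comp]; exact iSup₂_le fun v' hv' => hv'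

theorem le_rda {a b c : Q.Obj} {v : Q.Hom b c} {u : Q.Hom a b} {w : Q.Hom a c} :
    Q.comp v u ≤ w ↔ u ≤ rda v w := by
  constructor
  · exact fun h => le_sSup h
  · intro h
    calc Q.comp v u ≤ Q.comp v (rda v w) := comp_le_comp le_rfl h
      _ ≤ w := by
          rw [rda, Q.comp_sSup]; exact iSup₂_le fun u' hu' => hu'

end Quantaloid

variable {Q : Quantaloid.{u}}

/-- `Q`-relations between families of sets indexed by the objects of `Q`
(i.e. sets over `ob Q`, presented fibrewise). -/
abbrev QRel (Q : Quantaloid.{u}) (X Y : Q.Obj → Type u) : Type u :=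
  ∀ p q, X p → Y q → Q.Hom p q

/-- Composition of `Q`-relations. -/
def QRel.comp {X Y Z : Q.Obj → Type u} (ψ : QRel Q Y Z) (φ : QRel Q X Y) : QRel Q X Z :=
  fun p r x z => ⨆ q, ⨆ y : Y q, Q.comp (ψ q r y z) (φ p q x y)

theorem QRel.comp_mono {X Y Z : Q.Obj → Type u} {ψ ψ' : QRel Q Y Z} {φ φ' : QRel Q X Y}
    (h1 : ψ ≤ ψ') (h2 : φ ≤ φ') : QRel.comp ψ φ ≤ QRel.comp ψ' φ' := by
  intro p r x z
  exact iSup_mono fun q => iSup_mono fun y =>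
    Quantaloid.comp_le_comp (h1 q r y z) (h2 p q x y)

theorem QRel.comp_assoc {W X Y Z : Q.Obj → Type u}
    (χ : QRel Q Y Z) (ψ : QRel Q X Y) (φ : QRel Q W X) :
    QRel.comp (QRel.comp χ ψ) φ = QRel.comp χ (QRel.comp ψ φ) := by
  funext p s w z
  simp only [QRel.comp, Quantaloid.iSup_comp, Quantaloid.comp_iSup]
  apply le_antisymm
  · exact iSup₂_le fun q x => iSup₂_le fun r y =>
      le_iSup_of_le r (le_iSup_of_le y (le_iSup_of_le q (le_iSup_of_le x
        (Q.comp_assoc _ _ _).le)))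
  · exact iSup₂_le fun r y => iSup₂_le fun q x =>
      le_iSup_of_le q (le_iSup_of_le x (le_iSup_of_le r (le_iSup_of_le y
        (Q.comp_assoc _ _ _).ge)))

/-- A (small) `Q`-category. -/
structure QCat (Q : Quantaloid.{u}) : Type (u + 1) where
  el : Q.Obj → Type u
  hom : QRel Q el el
  refl : ∀ p (x : el p), Q.idm p ≤ hom p p x x
  trans : QRel.comp hom hom ≤ hom

/-- Pointwise transitivity in a `Q`-category. -/
theorem QCat.hom_comp_le (X : QCat Q) {p q r : Q.Obj}
    (x : X.el p) (y : X.el q) (z : X.el r) :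
    Q.comp (X.hom q r y z) (X.hom p q x y) ≤ X.hom p r x z :=
  le_trans
    (le_iSup_of_le q (le_iSup (fun y' : X.el q => Q.comp (X.hom q r y' z) (X.hom p q x y')) y))
    (X.trans p r x z)

/-- Any `Q`-relation into a `Q`-category embeds into its post-composite with the hom. -/
theorem QRel.le_hom_comp {W : Q.Obj → Type u} {Z : QCat Q} (ρ : QRel Q W Z.el) :
    ρ ≤ QRel.comp Z.hom ρ := by
  intro p q x z
  calc ρ p q x z = Q.comp (Q.idm q) (ρ p q x z) := (Q.idm_comp _).symm
    _ ≤ Q.comp (Z.hom q q z z) (ρ p q x z) := Quantaloid.comp_le_comp (Z.refl q z) le_rfl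
    _ ≤ _ := le_iSup_of_le q
        (le_iSup (fun z' : Z.el q => Q.comp (Z.hom q q z' z) (ρ p q x z')) z)

/-- Any `Q`-relation out of a `Q`-category embeds into its pre-composite with the hom. -/
theorem QRel.le_comp_hom {X : QCat Q} {W : Q.Obj → Type u} (ρ : QRel Q X.el W) :
    ρ ≤ QRel.comp ρ X.hom := by
  intro p q x z
  calc ρ p q x z = Q.comp (ρ p q x z) (Q.idm p) := (Q.comp_idm _).symm
    _ ≤ Q.comp (ρ p q x z) (X.hom p p x x) := Quantaloid.comp_le_comp le_rfl (X.refl p x)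
    _ ≤ _ := le_iSup_of_le p
        (le_iSup (fun x' : X.el p => Q.comp (ρ p q x' z) (X.hom p p x x')) x)

/-- A `Q`-functor. -/
structure QFun (X Y : QCat Q) : Type u where
  app : ∀ p, X.el p → Y.el p
  mono : ∀ p q (x : X.el p) (x' : X.el q),
    X.hom p q x x' ≤ Y.hom p q (app p x) (app q x')

def QFun.id (X : QCat Q) : QFun X X :=
  ⟨fun _ x => x, fun _ _ _ _ => le_rfl⟩

def QFun.comp {X Y Z : QCat Q} (g : QFun Y Z) (f : QFun X Y) : QFun X Z :=
  ⟨fun p x => g.app p (f.app p x),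
   fun p q x x' => le_trans (f.mono p q x x') (g.mono p q (f.app p x) (f.app q x'))⟩

/-- The (pointwise) order of `Q`-functors. -/
instance {X Y : QCat Q} : Preorder (QFun X Y) where
  le f g := ∀ p (x : X.el p), Q.idm p ≤ Y.hom p p (f.app p x) (g.app p x)
  le_refl f p x := Y.refl p (f.app p x)
  le_trans f g h h1 h2 := by
    intro p x
    calc Q.idm p = Q.comp (Q.idm p) (Q.idm p) := (Q.comp_idm _).symm
      _ ≤ Q.comp (Y.hom p p (g.app p x) (h.app p x)) (Y.hom p p (f.app p x) (g.app p x)) :=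
          Quantaloid.comp_le_comp (h2 p x) (h1 p x)
      _ ≤ Y.hom p p (f.app p x) (h.app p x) := Y.hom_comp_le _ _ _

/-- A `Q`-distributor between `Q`-categories. -/
structure QDist (X Y : QCat Q) : Type u where
  rel : QRel Q X.el Y.el
  compat : QRel.comp Y.hom (QRel.comp rel X.hom) ≤ rel

instance {X Y : QCat Q} : PartialOrder (QDist X Y) where
  le φ ψ := φ.rel ≤ ψ.rel
  le_refl φ := le_refl φ.rel
  le_trans _ _ _ h h' := by
    intro p q x y
    exact le_trans (h p q x y) (h' p q x y)
  le_antisymm φ ψ h h' := by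
    have hr : φ.rel = ψ.rel := le_antisymm h h'
    cases φ; cases ψ; cases hr; rfl

theorem QDist.hom_comp_le {X Y : QCat Q} (φ : QDist X Y) :
    QRel.comp Y.hom φ.rel ≤ φ.rel :=
  le_trans (QRel.comp_mono le_rfl (QRel.le_comp_hom φ.rel)) φ.compat

theorem QDist.comp_hom_le {X Y : QCat Q} (φ : QDist X Y) :
    QRel.comp φ.rel X.hom ≤ φ.rel :=
  le_trans (QRel.le_hom_comp _) φ.compat

theorem QDist.rel_comp_hom {X Y : QCat Q} (φ : QDist X Y) {p q r : Q.Obj}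
    (x : X.el p) (x' : X.el q) (y : Y.el r) :
    Q.comp (φ.rel q r x' y) (X.hom p q x x') ≤ φ.rel p r x y :=
  le_trans
    (le_iSup_of_le q (le_iSup (fun x'' : X.el q => Q.comp (φ.rel q r x'' y) (X.hom p q x x'')) x'))
    (φ.comp_hom_le p r x y)

theorem QDist.hom_comp_rel {X Y : QCat Q} (φ : QDist X Y) {p q r : Q.Obj}
    (x : X.el p) (y : Y.el q) (y' : Y.el r) :
    Q.comp (Y.hom q r y y') (φ.rel p q x y) ≤ φ.rel p r x y' :=
  le_trans
    (le_iSup_of_le q (le_iSup (fun y'' : Y.el q => Q.comp (Y.hom q r y'' y') (φ.rel p q x y'')) y))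
    (φ.hom_comp_le p r x y')

/-- Composition of `Q`-distributors. -/
def QDist.comp {X Y Z : QCat Q} (ψ : QDist Y Z) (φ : QDist X Y) : QDist X Z :=
  ⟨QRel.comp ψ.rel φ.rel, by
    calc QRel.comp Z.hom (QRel.comp (QRel.comp ψ.rel φ.rel) X.hom)
        = QRel.comp (QRel.comp Z.hom ψ.rel) (QRel.comp φ.rel X.hom) := by
          rw [QRel.comp_assoc, QRel.comp_assoc]
      _ ≤ QRel.comp ψ.rel φ.rel :=
          QRel.comp_mono ψ.hom_comp_le φ.comp_hom_le⟩

/-- The identity distributor `1_X^*` on a `Q`-category. -/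
def QCat.homDist (X : QCat Q) : QDist X X :=
  ⟨X.hom, le_trans (QRel.comp_mono le_rfl X.trans) X.trans⟩

/-- The graph `f_*` of a `Q`-functor. -/
def QFun.graph {X Y : QCat Q} (f : QFun X Y) : QDist X Y :=
  ⟨fun p q x y => Y.hom p q (f.app p x) y, by
    intro p q x y
    simp only [QRel.comp, Quantaloid.comp_iSup, Quantaloid.iSup_comp]
    refine iSup₂_le fun q' y' => iSup₂_le fun p' x' => ?_
    calc Q.comp (Y.hom q' q y' y) (Q.comp (Y.hom p' q' (f.app p' x') y') (X.hom p p' x x'))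
        ≤ Q.comp (Y.hom q' q y' y)
            (Q.comp (Y.hom p' q' (f.app p' x') y') (Y.hom p p' (f.app p x) (f.app p' x'))) :=
          Quantaloid.comp_le_comp le_rfl
            (Quantaloid.comp_le_comp le_rfl (f.mono p p' x x'))
      _ ≤ Q.comp (Y.hom q' q y' y) (Y.hom p q' (f.app p x) y') :=
          Quantaloid.comp_le_comp le_rfl (Y.hom_comp_le _ _ _)
      _ ≤ Y.hom p q (f.app p x) y := Y.hom_comp_le _ _ _⟩

/-- The cograph `f^*` of a `Q`-functor. -/
def QFun.cograph {X Y : QCat Q} (f : QFun X Y) : QDist Y X :=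
  ⟨fun p q y x => Y.hom p q y (f.app q x), by
    intro p q y x
    simp only [QRel.comp, Quantaloid.comp_iSup, Quantaloid.iSup_comp]
    refine iSup₂_le fun q' x' => iSup₂_le fun p' y' => ?_
    calc Q.comp (X.hom q' q x' x) (Q.comp (Y.hom p' q' y' (f.app q' x')) (Y.hom p p' y y'))
        ≤ Q.comp (Y.hom q' q (f.app q' x') (f.app q x))
            (Q.comp (Y.hom p' q' y' (f.app q' x')) (Y.hom p p' y y')) :=
          Quantaloid.comp_le_comp (f.mono q' q x' x) le_rfl
      _ ≤ Q.comp (Y.hom q' q (f.app q' x') (f.app q x)) (Y.hom p q' y (f.app q' x')) :=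
          Quantaloid.comp_le_comp le_rfl (Y.hom_comp_le _ _ _)
      _ ≤ Y.hom p q y (f.app q x) := Y.hom_comp_le _ _ _⟩

/-- The presheaf `Q`-category `P X`. -/
def QCat.P (X : QCat Q) : QCat Q where
  el s := { σ : ∀ p, X.el p → Q.Hom p s //
    ∀ p q (x : X.el p) (x' : X.el q), Q.comp (σ q x') (X.hom p q x x') ≤ σ p x }
  hom s s' σ σ' := ⨅ p, ⨅ x : X.el p, Quantaloid.lda (σ'.1 p x) (σ.1 p x)
  refl := by
    intro s σ
    refine le_iInf fun p => le_iInf fun x => Quantaloid.le_lda.mp ?_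
    rw [Q.idm_comp]
  trans := by
    intro s s'' σ σ''
    refine iSup₂_le fun s' σ' => ?_
    refine le_iInf fun p => le_iInf fun x => Quantaloid.le_lda.mp ?_
    rw [Q.comp_assoc]
    have h1 : Q.comp (⨅ p', ⨅ x' : X.el p', Quantaloid.lda (σ'.1 p' x') (σ.1 p' x'))
        (σ.1 p x) ≤ σ'.1 p x :=
      Quantaloid.le_lda.mpr (le_trans (iInf_le _ p) (iInf_le _ x))
    have h2 : Q.comp (⨅ p', ⨅ x' : X.el p', Quantaloid.lda (σ''.1 p' x') (σ'.1 p' x'))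
        (σ'.1 p x) ≤ σ''.1 p x :=
      Quantaloid.le_lda.mpr (le_trans (iInf_le _ p) (iInf_le _ x))
    exact le_trans (Quantaloid.comp_le_comp le_rfl h1) h2

/-- The copresheaf `Q`-category `P† X`. -/
def QCat.Pd (X : QCat Q) : QCat Q where
  el s := { τ : ∀ q, X.el q → Q.Hom s q //
    ∀ p q (x : X.el p) (x' : X.el q), Q.comp (X.hom p q x x') (τ p x) ≤ τ q x' }
  hom s s' τ τ' := ⨅ q, ⨅ x : X.el q, Quantaloid.rda (τ'.1 q x) (τ.1 q x)
  refl := by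
    intro s τ
    refine le_iInf fun q => le_iInf fun x => Quantaloid.le_rda.mp ?_
    rw [Q.comp_idm]
  trans := by
    intro s s'' τ τ''
    refine iSup₂_le fun s' τ' => ?_
    refine le_iInf fun q => le_iInf fun x => Quantaloid.le_rda.mp ?_
    rw [← Q.comp_assoc]
    have h1 : Q.comp (τ''.1 q x)
        (⨅ q', ⨅ x' : X.el q', Quantaloid.rda (τ''.1 q' x') (τ'.1 q' x')) ≤ τ'.1 q x :=
      Quantaloid.le_rda.mpr (le_trans (iInf_le _ q) (iInf_le _ x))
    have h2 : Q.comp (τ'.1 q x)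
        (⨅ q', ⨅ x' : X.el q', Quantaloid.rda (τ'.1 q' x') (τ.1 q' x')) ≤ τ.1 q x :=
      Quantaloid.le_rda.mpr (le_trans (iInf_le _ q) (iInf_le _ x))
    exact le_trans (Quantaloid.comp_le_comp h1 le_rfl) h2

/-- The Yoneda embedding `y_X : X → P X`. -/
def QCat.y (X : QCat Q) : QFun X X.P where
  app p x := ⟨fun q x' => X.hom q p x' x,
    fun p' q' x1 x2 => X.hom_comp_le x1 x2 x⟩
  mono := by
    intro p q x x'
    refine le_iInf fun r => le_iInf fun x'' => Quantaloid.le_lda.mp ?_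
    exact X.hom_comp_le x'' x x'

/-- The co-Yoneda embedding `y†_X : X → P† X`. -/
def QCat.yd (X : QCat Q) : QFun X X.Pd where
  app p x := ⟨fun q x' => X.hom p q x x',
    fun p' q' x1 x2 => X.hom_comp_le x x1 x2⟩
  mono := by
    intro p q x x'
    refine le_iInf fun r => le_iInf fun x'' => Quantaloid.le_rda.mp ?_
    exact X.hom_comp_le x x' x''

/-- `φ^→ : P Y → P X`, `τ ↦ τ ∘ φ`. -/
def QDist.fwd {X Y : QCat Q} (φ : QDist X Y) : QFun Y.P X.P where
  app s τ := ⟨fun p x => ⨆ q, ⨆ y : Y.el q, Q.comp (τ.1 q y) (φ.rel p q x y), by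
    intro p q x x'
    rw [Quantaloid.iSup_comp]
    refine iSup_le fun r => ?_
    rw [Quantaloid.iSup_comp]
    refine iSup_le fun y => ?_
    rw [Q.comp_assoc]
    exact le_iSup_of_le r (le_iSup_of_le y
      (Quantaloid.comp_le_comp le_rfl (φ.rel_comp_hom x x' y)))⟩
  mono := by
    intro s s' τ τ'
    refine le_iInf fun p => le_iInf fun x => Quantaloid.le_lda.mp ?_
    rw [Quantaloid.comp_iSup]
    refine iSup_le fun r => ?_
    rw [Quantaloid.comp_iSup]
    refine iSup_le fun y => ?_
    rw [← Q.comp_assoc]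
    have h : Q.comp (Y.P.hom s s' τ τ') (τ.1 r y) ≤ τ'.1 r y :=
      Quantaloid.le_lda.mpr (le_trans (iInf_le _ r) (iInf_le _ y))
    exact le_iSup_of_le r (le_iSup_of_le y (Quantaloid.comp_le_comp h le_rfl))

/-- `φ^↞ : P† X → P† Y`, `σ ↦ φ ∘ σ`. -/
def QDist.bwd {X Y : QCat Q} (φ : QDist X Y) : QFun X.Pd Y.Pd where
  app s σ := ⟨fun q y => ⨆ p, ⨆ x : X.el p, Q.comp (φ.rel p q x y) (σ.1 p x), by
    intro p q y y'
    rw [Quantaloid.comp_iSup]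
    refine iSup_le fun r => ?_
    rw [Quantaloid.comp_iSup]
    refine iSup_le fun x => ?_
    rw [← Q.comp_assoc]
    exact le_iSup_of_le r (le_iSup_of_le x
      (Quantaloid.comp_le_comp (φ.hom_comp_rel x y y') le_rfl))⟩
  mono := by
    intro s s' σ σ'
    refine le_iInf fun q => le_iInf fun y => Quantaloid.le_rda.mp ?_
    rw [Quantaloid.iSup_comp]
    refine iSup_le fun r => ?_
    rw [Quantaloid.iSup_comp]
    refine iSup_le fun x => ?_
    rw [Q.comp_assoc]
    have h : Q.comp (σ'.1 r x) (X.Pd.hom s s' σ σ') ≤ σ.1 r x :=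
      Quantaloid.le_rda.mpr (le_trans (iInf_le _ r) (iInf_le _ x))
    exact le_iSup_of_le r (le_iSup_of_le x (Quantaloid.comp_le_comp le_rfl h))

/-- `φ_→ : P X → P Y`, `σ ↦ σ ↙ φ`. -/
def QDist.fwdr {X Y : QCat Q} (φ : QDist X Y) : QFun X.P Y.P where
  app s σ := ⟨fun q y => ⨅ p, ⨅ x : X.el p, Quantaloid.lda (σ.1 p x) (φ.rel p q x y), by
    intro q q' y y'
    refine le_iInf fun p => le_iInf fun x => Quantaloid.le_lda.mp ?_
    rw [Q.comp_assoc]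
    have h1 : Q.comp (Y.hom q q' y y') (φ.rel p q x y) ≤ φ.rel p q' x y' :=
      φ.hom_comp_rel x y y'
    have h2 : Q.comp ((⨅ p', ⨅ x' : X.el p',
        Quantaloid.lda (σ.1 p' x') (φ.rel p' q' x' y')) : Q.Hom q' s) (φ.rel p q' x y')
        ≤ σ.1 p x :=
      Quantaloid.le_lda.mpr (le_trans (iInf_le _ p) (iInf_le _ x))
    exact le_trans (Quantaloid.comp_le_comp le_rfl h1) h2⟩
  mono := by
    intro s s' σ σ'
    refine le_iInf fun q => le_iInf fun y => Quantaloid.le_lda.mp ?_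
    refine le_iInf fun p => le_iInf fun x => Quantaloid.le_lda.mp ?_
    rw [Q.comp_assoc]
    have h1 : Q.comp ((⨅ p', ⨅ x' : X.el p',
        Quantaloid.lda (σ.1 p' x') (φ.rel p' q x' y)) : Q.Hom q s) (φ.rel p q x y)
        ≤ σ.1 p x :=
      Quantaloid.le_lda.mpr (le_trans (iInf_le _ p) (iInf_le _ x))
    have h2 : Q.comp (X.P.hom s s' σ σ') (σ.1 p x) ≤ σ'.1 p x :=
      Quantaloid.le_lda.mpr (le_trans (iInf_le _ p) (iInf_le _ x))
    exact le_trans (Quantaloid.comp_le_comp le_rfl h1) h2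

/-- Isbell `φ↑ : P X → P† Y`, `σ ↦ φ ↙ σ`. -/
def QDist.up {X Y : QCat Q} (φ : QDist X Y) : QFun X.P Y.Pd where
  app s σ := ⟨fun q y => ⨅ p, ⨅ x : X.el p, Quantaloid.lda (φ.rel p q x y) (σ.1 p x), by
    intro q q' y y'
    refine le_iInf fun p => le_iInf fun x => Quantaloid.le_lda.mp ?_
    rw [Q.comp_assoc]
    have h1 : Q.comp ((⨅ p', ⨅ x' : X.el p',
        Quantaloid.lda (φ.rel p' q x' y) (σ.1 p' x')) : Q.Hom s q) (σ.1 p x)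
        ≤ φ.rel p q x y :=
      Quantaloid.le_lda.mpr (le_trans (iInf_le _ p) (iInf_le _ x))
    exact le_trans (Quantaloid.comp_le_comp le_rfl h1) (φ.hom_comp_rel x y y')⟩
  mono := by
    intro s s' σ σ'
    refine le_iInf fun q => le_iInf fun y => Quantaloid.le_rda.mp ?_
    refine le_iInf fun p => le_iInf fun x => Quantaloid.le_lda.mp ?_
    rw [Q.comp_assoc]
    have h1 : Q.comp (X.P.hom s s' σ σ') (σ.1 p x) ≤ σ'.1 p x :=
      Quantaloid.le_lda.mpr (le_trans (iInf_le _ p) (iInf_le _ x))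
    have h2 : Q.comp ((⨅ p', ⨅ x' : X.el p',
        Quantaloid.lda (φ.rel p' q x' y) (σ'.1 p' x')) : Q.Hom s' q) (σ'.1 p x)
        ≤ φ.rel p q x y :=
      Quantaloid.le_lda.mpr (le_trans (iInf_le _ p) (iInf_le _ x))
    exact le_trans (Quantaloid.comp_le_comp le_rfl h1) h2

/-- Isbell `φ↓ : P† Y → P X`, `τ ↦ τ ↘ φ`. -/
def QDist.down {X Y : QCat Q} (φ : QDist X Y) : QFun Y.Pd X.P where
  app s τ := ⟨fun p x => ⨅ q, ⨅ y : Y.el q, Quantaloid.rda (τ.1 q y) (φ.rel p q x y), by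
    intro p p' x x'
    refine le_iInf fun q => le_iInf fun y => Quantaloid.le_rda.mp ?_
    rw [← Q.comp_assoc]
    have h1 : Q.comp (τ.1 q y) ((⨅ q', ⨅ y' : Y.el q',
        Quantaloid.rda (τ.1 q' y') (φ.rel p' q' x' y')) : Q.Hom p' s)
        ≤ φ.rel p' q x' y :=
      Quantaloid.le_rda.mpr (le_trans (iInf_le _ q) (iInf_le _ y))
    exact le_trans (Quantaloid.comp_le_comp h1 le_rfl) (φ.rel_comp_hom x x' y)⟩
  mono := by
    intro s s' τ τ'
    refine le_iInf fun p => le_iInf fun x => Quantaloid.le_lda.mp ?_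
    refine le_iInf fun q => le_iInf fun y => Quantaloid.le_rda.mp ?_
    rw [← Q.comp_assoc]
    have h1 : Q.comp (τ'.1 q y) (Y.Pd.hom s s' τ τ') ≤ τ.1 q y :=
      Quantaloid.le_rda.mpr (le_trans (iInf_le _ q) (iInf_le _ y))
    have h2 : Q.comp (τ.1 q y) ((⨅ q', ⨅ y' : Y.el q',
        Quantaloid.rda (τ.1 q' y') (φ.rel p q' x y')) : Q.Hom p s)
        ≤ φ.rel p q x y :=
      Quantaloid.le_rda.mpr (le_trans (iInf_le _ q) (iInf_le _ y))
    exact le_trans (Quantaloid.comp_le_comp h1 le_rfl) h2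

/-- The transpose `←φ : Y → P X` of a distributor `φ : X ⇸ Y`. -/
def QDist.transpose {X Y : QCat Q} (φ : QDist X Y) : QFun Y X.P where
  app q y := ⟨fun p x => φ.rel p q x y,
    fun p q' x x' => φ.rel_comp_hom x x' y⟩
  mono := by
    intro q q' y y'
    refine le_iInf fun p => le_iInf fun x => Quantaloid.le_lda.mp ?_
    exact φ.hom_comp_rel x y y'

/-- The inverse of transposition. -/
def QFun.untranspose {X Y : QCat Q} (g : QFun Y X.P) : QDist X Y :=
  ⟨fun p q x y => (g.app q y).1 p x, by
    intro p q x y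
    simp only [QRel.comp, Quantaloid.comp_iSup, Quantaloid.iSup_comp]
    refine iSup₂_le fun q' y' => iSup₂_le fun p' x' => ?_
    have h1 : Q.comp ((g.app q' y').1 p' x') (X.hom p p' x x') ≤ (g.app q' y').1 p x :=
      (g.app q' y').2 p p' x x'
    have h2 : Q.comp (Y.hom q' q y' y) ((g.app q' y').1 p x) ≤ (g.app q y).1 p x :=
      Quantaloid.le_lda.mpr
        (le_trans (g.mono q' q y' y) (le_trans (iInf_le _ p) (iInf_le _ x)))
    exact le_trans (Quantaloid.comp_le_comp le_rfl h1) h2⟩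

/-- `f_! := (f^*)^→ : P X → P Y`. -/
def pshf {X Y : QCat Q} (f : QFun X Y) : QFun X.P Y.P := f.cograph.fwd

/-- `f^! := (f_*)^→ : P Y → P X`. -/
def pshb {X Y : QCat Q} (f : QFun X Y) : QFun Y.P X.P := f.graph.fwd

/-- `f_† := (f_*)^↞ : P† X → P† Y`. -/
def cpsf {X Y : QCat Q} (f : QFun X Y) : QFun X.Pd Y.Pd := f.graph.bwd

/-- `f^† := (f^*)^↞ : P† Y → P† X`. -/
def cpsb {X Y : QCat Q} (f : QFun X Y) : QFun Y.Pd X.Pd := f.cograph.bwd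

/-- `sup_{P X} = y_X^! : P P X → P X`: the multiplication of the presheaf 2-monad. -/
def supP (X : QCat Q) : QFun X.P.P X.P := pshb X.y

/-- `inf_{P† X} = (y†_X)^† : P† P† X → P† X`: the multiplication of the copresheaf
2-monad. -/
def infPd (X : QCat Q) : QFun X.Pd.Pd X.Pd := cpsb X.yd

/-- Adjunction `f ⊣ g` in `Q`-Cat. -/
def QAdj {X Y : QCat Q} (f : QFun X Y) (g : QFun Y X) : Prop :=
  QFun.id X ≤ g.comp f ∧ f.comp g ≤ QFun.id Y

/-- Fully faithful `Q`-functors. -/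
def QFun.FullyFaithful {X Y : QCat Q} (f : QFun X Y) : Prop :=
  ∀ p q (x : X.el p) (x' : X.el q), X.hom p q x x' = Y.hom p q (f.app p x) (f.app q x')

/-- A `Q`-closure operation on a `Q`-category. -/
def IsClosureOp (Z : QCat Q) (c : QFun Z Z) : Prop :=
  QFun.id Z ≤ c ∧ c.comp c = c

/-- A 2-functor on `Q`-Cat. -/
structure TwoFunctor (Q : Quantaloid.{u}) : Type (u + 1) where
  obj : QCat Q → QCat Q
  map : ∀ {X Y : QCat Q}, QFun X Y → QFun (obj X) (obj Y)
  map_id : ∀ X : QCat Q, map (QFun.id X) = QFun.id (obj X)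
  map_comp : ∀ {X Y Z : QCat Q} (g : QFun Y Z) (f : QFun X Y),
    map (g.comp f) = (map g).comp (map f)
  map_mono : ∀ {X Y : QCat Q} {f g : QFun X Y}, f ≤ g → map f ≤ map g

/-- A 2-monad on `Q`-Cat. -/
structure TwoMonad (Q : Quantaloid.{u}) extends TwoFunctor Q where
  unit : ∀ X : QCat Q, QFun X (obj X)
  mult : ∀ X : QCat Q, QFun (obj (obj X)) (obj X)
  unit_nat : ∀ {X Y : QCat Q} (f : QFun X Y), (unit Y).comp f = (map f).comp (unit X)
  mult_nat : ∀ {X Y : QCat Q} (f : QFun X Y),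
    (mult Y).comp (map (map f)) = (map f).comp (mult X)
  mult_unit : ∀ X : QCat Q, (mult X).comp (unit (obj X)) = QFun.id (obj X)
  mult_map_unit : ∀ X : QCat Q, (mult X).comp (map (unit X)) = QFun.id (obj X)
  mult_assoc : ∀ X : QCat Q, (mult X).comp (map (mult X)) = (mult X).comp (mult (obj X))

/-- The type of families `λ_X : T P X → P T X`. -/
abbrev LamFamily (T : TwoFunctor Q) : Type (u + 1) :=
  ∀ X : QCat Q, QFun (T.obj X.P) ((T.obj X).P)

/-- Lax naturality law (a): `(Tf)_! ∘ λ_X ≤ λ_Y ∘ T(f_!)`. -/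
def LawA (T : TwoFunctor Q) (lam : LamFamily T) : Prop :=
  ∀ (X Y : QCat Q) (f : QFun X Y),
    (pshf (T.map f)).comp (lam X) ≤ (lam Y).comp (T.map (pshf f))

/-- Lax `P`-unit law (b): `y_{TX} ≤ λ_X ∘ T y_X`. -/
def LawB (T : TwoFunctor Q) (lam : LamFamily T) : Prop :=
  ∀ X : QCat Q, QCat.y (T.obj X) ≤ (lam X).comp (T.map X.y)

/-- The `P`-unit law (b) holding strictly (flatness). -/
def LawBstrict (T : TwoFunctor Q) (lam : LamFamily T) : Prop :=
  ∀ X : QCat Q, (lam X).comp (T.map X.y) = QCat.y (T.obj X)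

/-- Lax `P`-multiplication law (c): `s_{TX} ∘ (λ_X)_! ∘ λ_{PX} ≤ λ_X ∘ T s_X`. -/
def LawC (T : TwoFunctor Q) (lam : LamFamily T) : Prop :=
  ∀ X : QCat Q,
    (supP (T.obj X)).comp ((pshf (lam X)).comp (lam X.P)) ≤ (lam X).comp (T.map (supP X))

/-- Lax `T`-unit law (d): `(e_X)_! ≤ λ_X ∘ e_{PX}`. -/
def LawD (M : TwoMonad Q) (lam : LamFamily M.toTwoFunctor) : Prop :=
  ∀ X : QCat Q, pshf (M.unit X) ≤ (lam X).comp (M.unit X.P)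

/-- Lax `T`-multiplication law (e): `(m_X)_! ∘ λ_{TX} ∘ T λ_X ≤ λ_X ∘ m_{PX}`. -/
def LawE (M : TwoMonad Q) (lam : LamFamily M.toTwoFunctor) : Prop :=
  ∀ X : QCat Q,
    (pshf (M.mult X)).comp ((lam (M.obj X)).comp (M.map (lam X))) ≤ (lam X).comp (M.mult X.P)

def IsDistLawABC (T : TwoFunctor Q) (lam : LamFamily T) : Prop :=
  LawA T lam ∧ LawB T lam ∧ LawC T lam

/-- A (lax) distributive law of the 2-monad `M` over the presheaf 2-monad. -/
def IsDistLaw (M : TwoMonad Q) (lam : LamFamily M.toTwoFunctor) : Prop :=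
  IsDistLawABC M.toTwoFunctor lam ∧ LawD M lam ∧ LawE M lam

/-- A flat distributive law: (b) holds strictly. -/
def IsFlatDistLaw (M : TwoMonad Q) (lam : LamFamily M.toTwoFunctor) : Prop :=
  IsDistLaw M lam ∧ LawBstrict M.toTwoFunctor lam

/-- Lax `λ`-algebra: laws (f) and (g). -/
def IsLaxAlg (M : TwoMonad Q) (lam : LamFamily M.toTwoFunctor) (X : QCat Q)
    (p : QFun (M.obj X) X.P) : Prop :=
  X.y ≤ p.comp (M.unit X) ∧
  (supP X).comp ((pshf p).comp ((lam X).comp (M.map p))) ≤ p.comp (M.mult X)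

/-- Lax `λ`-homomorphism: law (h). -/
def IsLaxHom (M : TwoMonad Q) {X Y : QCat Q}
    (p : QFun (M.obj X) X.P) (q : QFun (M.obj Y) Y.P) (f : QFun X Y) : Prop :=
  (pshf f).comp p ≤ q.comp (M.map f)

/-- The type of families `T̂φ : TX ⇸ TY`, one for each `φ : X ⇸ Y`. -/
abbrev ExtFamily (T : TwoFunctor Q) : Type (u + 1) :=
  ∀ ⦃X Y : QCat Q⦄, QDist X Y → QDist (T.obj X) (T.obj Y)

/-- A lax extension of the 2-functor `T` to `Q`-Dist: conditions (1), (2), (3). -/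
def IsLaxExt (T : TwoFunctor Q) (ext : ExtFamily T) : Prop :=
  (∀ (X Y : QCat Q) (φ φ' : QDist X Y), φ ≤ φ' → ext φ ≤ ext φ') ∧
  (∀ (X Y Z : QCat Q) (φ : QDist X Y) (ψ : QDist Y Z), (ext ψ).comp (ext φ) ≤ ext (ψ.comp φ)) ∧
  (∀ (X Y : QCat Q) (f : QFun X Y),
    (T.map f).graph ≤ ext f.graph ∧ (T.map f).cograph ≤ ext f.cograph)

/-- Condition (4): `φ ∘ e_X^* ≤ e_Y^* ∘ T̂φ`. -/
def ExtLaw4 (M : TwoMonad Q) (ext : ExtFamily M.toTwoFunctor) : Prop :=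
  ∀ (X Y : QCat Q) (φ : QDist X Y),
    φ.comp (M.unit X).cograph ≤ ((M.unit Y).cograph).comp (ext φ)

/-- Condition (5): `T̂T̂φ ∘ m_X^* ≤ m_Y^* ∘ T̂φ`. -/
def ExtLaw5 (M : TwoMonad Q) (ext : ExtFamily M.toTwoFunctor) : Prop :=
  ∀ (X Y : QCat Q) (φ : QDist X Y),
    (ext (ext φ)).comp (M.mult X).cograph ≤ ((M.mult Y).cograph).comp (ext φ)

/-- A lax extension of the 2-monad `M` to `Q`-Dist. -/
def IsMonadLaxExt (M : TwoMonad Q) (ext : ExtFamily M.toTwoFunctor) : Prop :=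
  IsLaxExt M.toTwoFunctor ext ∧ ExtLaw4 M ext ∧ ExtLaw5 M ext

/-- Flatness of a lax extension: `T̂ 1_X^* = 1_{TX}^*`. -/
def FlatExt (T : TwoFunctor Q) (ext : ExtFamily T) : Prop :=
  ∀ X : QCat Q, ext X.homDist = (T.obj X).homDist

/-- From a lax distributive law to a lax extension: `←(T̂φ) = λ_X ∘ T(←φ)`. -/
def PhiExt (T : TwoFunctor Q) (lam : LamFamily T) : ExtFamily T :=
  fun X Y φ => QFun.untranspose ((lam X).comp (T.map φ.transpose))

/-- From a lax extension to a lax distributive law: `λ_X = ←(T̂((y_X)_*))`. -/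
def PsiLam (T : TwoFunctor Q) (ext : ExtFamily T) : LamFamily T :=
  fun X => (ext X.y.graph).transpose

/-- The canonical lax extension `T̂φ = (T ←φ)^* ∘ (T y_X)_*`. -/
def hatExt (T : TwoFunctor Q) : ExtFamily T :=
  fun X Y φ => ((T.map φ.transpose).cograph).comp (T.map X.y).graph

/-- `λ_X = y_{PX} ∘ sup_{PX}`: the flat distributive law of `P` over itself. -/
def lamP (X : QCat Q) : QFun X.P.P X.P.P := (QCat.y X.P).comp (supP X)

/-- `λ†_X = ((y_X)_†)^! ∘ y_{P†PX}`: the strict distributive law of `P†` over `P`. -/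
def lamd (X : QCat Q) : QFun X.P.Pd X.Pd.P := (pshb (cpsf X.y)).comp (QCat.y X.P.Pd)

/-- `Λ_X = y_{PP†X} ∘ ((y_X)_†)^!`: the flat distributive law of `P P†` over `P`. -/
def LamPPd (X : QCat Q) : QFun X.P.Pd.P X.Pd.P.P := (QCat.y X.Pd.P).comp (pshb (cpsf X.y))

/-- The multiplication `S_X = s_{P†X} ∘ (y†_{PP†X})^!` of the double presheaf 2-monad. -/
def Smult (X : QCat Q) : QFun X.Pd.P.Pd.P X.Pd.P := (supP X.Pd).comp (pshb (QCat.yd X.Pd.P))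

/-- `Λ†_X = (y_X^!)^{†!} ∘ y_{P†PPX}`: the flat distributive law of `P† P` over `P`. -/
def LamPdP (X : QCat Q) : QFun X.P.P.Pd X.P.Pd.P :=
  (pshf (cpsf (supP X))).comp (QCat.y X.P.P.Pd)

/-- The multiplication `S†_X = s†_{PX} ∘ (y_{P†PX})^†` of the double copresheaf
2-monad. -/
def Sdmult (X : QCat Q) : QFun X.P.Pd.P.Pd X.P.Pd := (infPd X.P).comp (cpsb (QCat.y X.P.Pd))

/-- Pointwise infimum of a family of `Q`-functors into a presheaf `Q`-category. -/
def QFun.iInfP {ι : Type u} {Z X : QCat Q} (F : ι → QFun Z X.P) : QFun Z X.P where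
  app s z := ⟨fun p x => ⨅ i, ((F i).app s z).1 p x, by
    intro p q x x'
    refine le_iInf fun i => ?_
    exact le_trans
      (Quantaloid.comp_le_comp (iInf_le (fun i => ((F i).app s z).1 q x') i) le_rfl)
      (((F i).app s z).2 p q x x')⟩
  mono := by
    intro s s' z z'
    refine le_iInf fun p => le_iInf fun x => Quantaloid.le_lda.mp ?_
    refine le_iInf fun i => ?_
    have h1 : Q.comp (Z.hom s s' z z') (⨅ j, ((F j).app s z).1 p x)
        ≤ Q.comp (Z.hom s s' z z') (((F i).app s z).1 p x) :=
      Quantaloid.comp_le_comp le_rfl (iInf_le _ i)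
    have h2 : Q.comp (Z.hom s s' z z') (((F i).app s z).1 p x)
        ≤ ((F i).app s' z').1 p x :=
      Quantaloid.le_lda.mpr
        (le_trans ((F i).mono s s' z z') (le_trans (iInf_le _ p) (iInf_le _ x)))
    exact le_trans h1 h2

/-- The distributor `X ⇸ PX` associated with a `Q`-functor `c : PX → PX`, given by
`φ(x,σ) = (c σ)(x)`; for a `Q`-closure operation `c` on `PX` this realises the
correspondence `c = ←φ` of Theorem `PdP_Alg`. -/
def clsDist (X : QCat Q) (c : QFun X.P X.P) : QDist X X.P :=
  ⟨fun p q x σ => (c.app q σ).1 p x, by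
    intro p q x σ
    simp only [QRel.comp, Quantaloid.comp_iSup, Quantaloid.iSup_comp]
    refine iSup₂_le fun q' σ' => iSup₂_le fun p' x' => ?_
    have h1 : Q.comp ((c.app q' σ').1 p' x') (X.hom p p' x x') ≤ (c.app q' σ').1 p x :=
      (c.app q' σ').2 p p' x x'
    have h2 : Q.comp (X.P.hom q' q σ' σ) ((c.app q' σ').1 p x) ≤ (c.app q σ).1 p x :=
      Quantaloid.le_lda.mpr
        (le_trans (c.mono q' q σ' σ) (le_trans (iInf_le _ p) (iInf_le _ x)))
    exact le_trans (Quantaloid.comp_le_comp le_rfl h1) h2⟩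

/-- The lax `Λ†`-algebra structure `p = φ↓ : P†PX → PX` associated with a
`Q`-closure structure `c` on `X`. -/
def clsAlg (X : QCat Q) (c : QFun X.P X.P) : QFun X.P.Pd X.P := (clsDist X c).down

/-- Laws (f) and (g) of a lax `Λ†`-algebra, for the double copresheaf 2-monad `𝔓†𝔓`
with its flat distributive law `Λ†` over `𝔓`. -/
def IsAlgPdP (X : QCat Q) (p : QFun X.P.Pd X.P) : Prop :=
  X.y ≤ p.comp ((QCat.yd X.P).comp X.y) ∧
  (supP X).comp ((pshf p).comp ((LamPdP X).comp (cpsf (pshf p)))) ≤ p.comp (Sdmult X)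

/-! ### Auxiliary lemmas for Statement 13 -/

section Stmt13Aux

variable {Q : Quantaloid.{u}}

theorem comp_rda_le {a b c : Q.Obj} (v : Q.Hom b c) (w : Q.Hom a c) :
    Q.comp v (Quantaloid.rda v w) ≤ w := Quantaloid.le_rda.mpr le_rfl

theorem comp_lda_le {a b c : Q.Obj} (w : Q.Hom a c) (u : Q.Hom a b) :
    Q.comp (Quantaloid.lda w u) u ≤ w := Quantaloid.le_lda.mpr le_rfl

theorem rda_mono {a b c : Q.Obj} {v : Q.Hom b c} {w w' : Q.Hom a c} (h : w ≤ w') :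
    Quantaloid.rda v w ≤ Quantaloid.rda v w' :=
  Quantaloid.le_rda.mp ((comp_rda_le v w).trans h)

theorem le_comp_left {a b : Q.Obj} {v : Q.Hom b b} (h : Q.idm b ≤ v) (u : Q.Hom a b) :
    u ≤ Q.comp v u := by
  calc u = Q.comp (Q.idm b) u := (Q.idm_comp u).symm
    _ ≤ Q.comp v u := Quantaloid.comp_le_comp h le_rfl

theorem le_comp_right {a b : Q.Obj} {u : Q.Hom a a} (h : Q.idm a ≤ u) (v : Q.Hom a b) :
    v ≤ Q.comp v u := by
  calc v = Q.comp v (Q.idm a) := (Q.comp_idm v).symm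
    _ ≤ Q.comp v u := Quantaloid.comp_le_comp le_rfl h

theorem rda_le_of_idm {a c : Q.Obj} {v : Q.Hom c c} (h : Q.idm c ≤ v) (w : Q.Hom a c) :
    Quantaloid.rda v w ≤ w := (le_comp_left h _).trans (comp_rda_le v w)

theorem idm_le_comp {a : Q.Obj} {u v : Q.Hom a a} (hu : Q.idm a ≤ u) (hv : Q.idm a ≤ v) :
    Q.idm a ≤ Q.comp u v := by
  calc Q.idm a = Q.comp (Q.idm a) (Q.idm a) := (Q.comp_idm _).symm
    _ ≤ Q.comp u v := Quantaloid.comp_le_comp hu hv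

variable {X : QCat Q}

theorem Phom_comp_le {s s' : Q.Obj} (σ : X.P.el s) (σ' : X.P.el s') {p : Q.Obj} (x : X.el p) :
    Q.comp (X.P.hom s s' σ σ') (σ.1 p x) ≤ σ'.1 p x :=
  Quantaloid.le_lda.mpr (le_trans (iInf_le _ p) (iInf_le _ x))

theorem le_Phom {s s' : Q.Obj} {σ : X.P.el s} {σ' : X.P.el s'} {v : Q.Hom s s'}
    (h : ∀ p (x : X.el p), Q.comp v (σ.1 p x) ≤ σ'.1 p x) :
    v ≤ X.P.hom s s' σ σ' :=
  le_iInf fun p => le_iInf fun x => Quantaloid.le_lda.mp (h p x)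

theorem le_P_iff {s : Q.Obj} {σ σ' : X.P.el s} :
    Q.idm s ≤ X.P.hom s s σ σ' ↔ ∀ p (x : X.el p), σ.1 p x ≤ σ'.1 p x := by
  constructor
  · intro h p x
    have h2 : Q.comp (Q.idm s) (σ.1 p x) ≤ σ'.1 p x :=
      le_trans (Quantaloid.comp_le_comp h le_rfl) (Phom_comp_le σ σ' x)
    rwa [Q.idm_comp] at h2
  · intro h
    refine le_Phom fun p x => ?_
    rw [Q.idm_comp]; exact h p x

theorem Pdhom_comp_le {s s' : Q.Obj} (τ : X.Pd.el s) (τ' : X.Pd.el s') {q : Q.Obj} (x : X.el q) :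
    Q.comp (τ'.1 q x) (X.Pd.hom s s' τ τ') ≤ τ.1 q x :=
  Quantaloid.le_rda.mpr (le_trans (iInf_le _ q) (iInf_le _ x))

theorem le_Pdhom {s s' : Q.Obj} {τ : X.Pd.el s} {τ' : X.Pd.el s'} {v : Q.Hom s s'}
    (h : ∀ q (x : X.el q), Q.comp (τ'.1 q x) v ≤ τ.1 q x) :
    v ≤ X.Pd.hom s s' τ τ' :=
  le_iInf fun q => le_iInf fun x => Quantaloid.le_rda.mp (h q x)

theorem le_Pd_iff {s : Q.Obj} {τ τ' : X.Pd.el s} :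
    Q.idm s ≤ X.Pd.hom s s τ τ' ↔ ∀ q (x : X.el q), τ'.1 q x ≤ τ.1 q x := by
  constructor
  · intro h q x
    have h2 : Q.comp (τ'.1 q x) (Q.idm s) ≤ τ.1 q x :=
      le_trans (Quantaloid.comp_le_comp le_rfl h) (Pdhom_comp_le τ τ' x)
    rwa [Q.comp_idm] at h2
  · intro h
    refine le_Pdhom fun q x => ?_
    rw [Q.comp_idm]; exact h q x

theorem Phom_anti {s s' : Q.Obj} {σ σ' : X.P.el s} {ρ : X.P.el s'}
    (h : ∀ p (x : X.el p), σ.1 p x ≤ σ'.1 p x) :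
    X.P.hom s s' σ' ρ ≤ X.P.hom s s' σ ρ :=
  le_Phom fun p x =>
    le_trans (Quantaloid.comp_le_comp le_rfl (h p x)) (Phom_comp_le σ' ρ x)

theorem yoneda_le {p s : Q.Obj} (x : X.el p) (σ : X.P.el s) :
    X.P.hom p s (X.y.app p x) σ ≤ σ.1 p x :=
  le_trans
    (le_comp_right (show Q.idm p ≤ ((X.y.app p x).1 p x) from X.refl p x) _)
    (Phom_comp_le (X.y.app p x) σ x)

theorem le_yoneda {p s : Q.Obj} (x : X.el p) (σ : X.P.el s) :
    σ.1 p x ≤ X.P.hom p s (X.y.app p x) σ :=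
  le_Phom fun p' x' => σ.2 p' p x' x

theorem le_coyoneda {s q : Q.Obj} (τ : X.Pd.el s) (z : X.el q) :
    τ.1 q z ≤ X.Pd.hom s q τ (X.yd.app q z) :=
  le_Pdhom fun q' z' => τ.2 q q' z z'

theorem pshf_val {X Y : QCat Q} (f : QFun X Y) {s : Q.Obj} (σ : X.P.el s)
    {q : Q.Obj} (y : Y.el q) :
    ((pshf f).app s σ).1 q y
      = ⨆ p, ⨆ x : X.el p, Q.comp (σ.1 p x) (Y.hom q p y (f.app p x)) := rfl

theorem cpsf_val {X Y : QCat Q} (f : QFun X Y) {s : Q.Obj} (τ : X.Pd.el s)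
    {q : Q.Obj} (y : Y.el q) :
    ((cpsf f).app s τ).1 q y
      = ⨆ p, ⨆ x : X.el p, Q.comp (Y.hom p q (f.app p x) y) (τ.1 p x) := rfl

theorem pshb_val {X Y : QCat Q} (f : QFun X Y) {s : Q.Obj} (σ : Y.P.el s)
    {p : Q.Obj} (x : X.el p) :
    ((pshb f).app s σ).1 p x = σ.1 p (f.app p x) := by
  apply le_antisymm
  · exact iSup₂_le fun q y => σ.2 p q (f.app p x) y
  · exact le_iSup₂_of_le p (f.app p x) (le_comp_right (Y.refl p (f.app p x)) _)

theorem cpsb_val {X Y : QCat Q} (f : QFun X Y) {s : Q.Obj} (τ : Y.Pd.el s)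
    {q : Q.Obj} (x : X.el q) :
    ((cpsb f).app s τ).1 q x = τ.1 q (f.app q x) := by
  apply le_antisymm
  · exact iSup₂_le fun p y => τ.2 p q y (f.app q x)
  · exact le_iSup₂_of_le q (f.app q x) (le_comp_left (Y.refl q (f.app q x)) _)

theorem supP_val (X : QCat Q) {s : Q.Obj} (Sg : X.P.P.el s) {p : Q.Obj} (x : X.el p) :
    ((supP X).app s Sg).1 p x = Sg.1 p (X.y.app p x) :=
  pshb_val X.y Sg x

theorem Sdmult_val (X : QCat Q) {s : Q.Obj} (Θ : X.P.Pd.P.Pd.el s)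
    {q : Q.Obj} (σ : X.P.el q) :
    ((Sdmult X).app s Θ).1 q σ
      = Θ.1 q ((QCat.y X.P.Pd).app q ((QCat.yd X.P).app q σ)) := by
  have h1 : ((Sdmult X).app s Θ)
      = (cpsb (QCat.yd X.P)).app s ((cpsb (QCat.y X.P.Pd)).app s Θ) := rfl
  rw [h1, cpsb_val, cpsb_val]

theorem clsAlg_val (X : QCat Q) (c : QFun X.P X.P) {s : Q.Obj} (τ : X.P.Pd.el s)
    {p : Q.Obj} (x : X.el p) :
    ((clsAlg X c).app s τ).1 p x
      = ⨅ q, ⨅ σ : X.P.el q, Quantaloid.rda (τ.1 q σ) ((c.app q σ).1 p x) := rfl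

theorem LamPdP_val (X : QCat Q) {s : Q.Obj} (Ξ : X.P.P.Pd.el s)
    {q : Q.Obj} (τ : X.P.Pd.el q) :
    ((LamPdP X).app s Ξ).1 q τ
      = ⨆ q', ⨆ Ξ' : X.P.P.Pd.el q',
          Q.comp (X.P.P.Pd.hom q' s Ξ' Ξ)
            (X.P.Pd.hom q q' τ ((cpsf (supP X)).app q' Ξ')) := rfl

theorem QFun.ext' {X Y : QCat Q} {f g : QFun X Y} (h : ∀ p x, f.app p x = g.app p x) :
    f = g := by
  cases f; cases g
  simp only [QFun.mk.injEq]
  funext p x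
  exact h p x

theorem Pel_ext {s : Q.Obj} {σ σ' : X.P.el s}
    (h : ∀ p (x : X.el p), σ.1 p x = σ'.1 p x) : σ = σ' :=
  Subtype.ext (funext fun p => funext fun x => h p x)

theorem clsAlg_yd (X : QCat Q) (c : QFun X.P X.P) {s : Q.Obj} (σ : X.P.el s) :
    (clsAlg X c).app s ((QCat.yd X.P).app s σ) = c.app s σ := by
  refine Pel_ext fun p x => le_antisymm ?_ ?_
  · refine le_trans (le_trans (iInf_le _ s) (iInf_le _ σ)) ?_
    exact rda_le_of_idm (X.P.refl s σ) _
  · refine le_iInf fun qρ => le_iInf fun ρ => Quantaloid.le_rda.mp ?_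
    exact le_trans (Quantaloid.comp_le_comp (c.mono s qρ σ ρ) le_rfl)
      (Phom_comp_le (c.app s σ) (c.app qρ ρ) x)

theorem partA (X : QCat Q) (c : QFun X.P X.P) (hc : IsClosureOp X.P c) :
    IsAlgPdP X (clsAlg X c) := by
  have hcpt : ∀ (s : Q.Obj) (σ : X.P.el s) p (x : X.el p),
      σ.1 p x ≤ (c.app s σ).1 p x := fun s σ => le_P_iff.mp (hc.1 s σ)
  have hccpt : ∀ (s : Q.Obj) (σ : X.P.el s), c.app s (c.app s σ) = c.app s σ :=
    fun s σ => congrFun (congrFun (congrArg QFun.app hc.2) s) σ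
  constructor
  · -- law (f)
    intro px x
    refine le_P_iff.mpr fun p' x' => ?_
    refine le_iInf fun qσ => le_iInf fun σ => Quantaloid.le_rda.mp ?_
    exact le_trans (Phom_comp_le (X.y.app px x) σ x') (hcpt qσ σ p' x')
  · -- law (g)
    intro s Θ
    refine le_P_iff.mpr fun p x => ?_
    set pc := clsAlg X c with hpc
    set Θ' := (cpsf (pshf pc)).app s Θ with hΘ'
    set Λ := (LamPdP X).app s Θ' with hΛ
    rw [show ((supP X).comp ((pshf pc).comp ((LamPdP X).comp (cpsf (pshf pc))))).app s Θ
        = (supP X).app s ((pshf pc).app s Λ) from rfl]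
    rw [supP_val, pshf_val]
    refine iSup₂_le fun qτ τ => ?_
    rw [LamPdP_val, Quantaloid.iSup_comp]
    refine iSup_le fun q₁ => ?_
    rw [Quantaloid.iSup_comp]
    refine iSup_le fun Ξ' => ?_
    -- right-hand side
    rw [show ((pc.comp (Sdmult X)).app s Θ) = pc.app s ((Sdmult X).app s Θ) from rfl,
      clsAlg_val]
    refine le_iInf fun q0 => le_iInf fun σ0 => Quantaloid.le_rda.mp ?_
    rw [Sdmult_val]
    -- abbreviations
    set ydσ0 := (QCat.yd X.P).app q0 σ0 with hydσ0
    set hσ0 := (QCat.y X.P.Pd).app q0 ydσ0 with hhσ0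
    set S0 := (pshf pc).app q0 hσ0 with hS0
    set A := X.P.P.Pd.hom q₁ s Ξ' Θ' with hA
    set B := X.P.Pd.hom qτ q₁ τ ((cpsf (supP X)).app q₁ Ξ') with hB
    set P₀ := X.P.hom p qτ (X.y.app p x) (pc.app qτ τ) with hP₀
    -- Step: sup S0 ≤ c σ0 pointwise
    have hsup : ∀ p' (x' : X.el p'),
        ((supP X).app q0 S0).1 p' x' ≤ (c.app q0 σ0).1 p' x' := by
      intro p' x'
      rw [supP_val, pshf_val]
      refine iSup₂_le fun qτ' τ' => ?_
      have h1 : hσ0.1 qτ' τ' ≤ τ'.1 q0 (c.app q0 σ0) := by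
        refine le_trans
          (le_comp_left (show Q.idm q0 ≤ ydσ0.1 q0 (c.app q0 σ0) from hc.1 q0 σ0) _) ?_
        exact Pdhom_comp_le (X := X.P) τ' ydσ0 (c.app q0 σ0)
      have h2 : X.P.hom p' qτ' (X.y.app p' x') (pc.app qτ' τ')
          ≤ Quantaloid.rda (τ'.1 q0 (c.app q0 σ0)) ((c.app q0 σ0).1 p' x') := by
        refine le_trans (yoneda_le x' (pc.app qτ' τ')) ?_
        have h3 : (pc.app qτ' τ').1 p' x'
            ≤ Quantaloid.rda (τ'.1 q0 (c.app q0 σ0))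
                ((c.app q0 (c.app q0 σ0)).1 p' x') :=
          le_trans (iInf_le _ q0) (iInf_le _ (c.app q0 σ0))
        rwa [hccpt q0 σ0] at h3
      exact le_trans (Quantaloid.comp_le_comp h1 h2) (comp_rda_le _ _)
    -- Step: Θ value ≤ Θ' value at S0
    have hTA : Q.comp (Θ.1 q0 hσ0) A ≤ Ξ'.1 q0 S0 := by
      have h1 : Θ.1 q0 hσ0 ≤ Θ'.1 q0 S0 := by
        rw [hΘ', cpsf_val]
        refine le_trans (le_comp_left (show Q.idm q0
          ≤ X.P.P.hom q0 q0 ((pshf pc).app q0 hσ0) S0 from X.P.P.refl q0 S0) _) ?_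
        exact le_iSup₂_of_le q0 hσ0 le_rfl
      exact le_trans (Quantaloid.comp_le_comp h1 le_rfl)
        (Pdhom_comp_le (X := X.P.P) Ξ' Θ' S0)
    -- Step: Ξ' value at S0 ≤ (cpsf sup Ξ') value at c σ0
    have hG : Ξ'.1 q0 S0 ≤ ((cpsf (supP X)).app q₁ Ξ').1 q0 (c.app q0 σ0) := by
      rw [cpsf_val]
      refine le_trans (le_comp_left (show Q.idm q0
        ≤ X.P.hom q0 q0 ((supP X).app q0 S0) (c.app q0 σ0) from le_P_iff.mpr hsup) _) ?_
      exact le_iSup₂_of_le q0 S0 le_rfl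
    have hXB : Q.comp (Ξ'.1 q0 S0) B ≤ τ.1 q0 (c.app q0 σ0) :=
      le_trans (Quantaloid.comp_le_comp hG le_rfl)
        (Pdhom_comp_le (X := X.P) τ ((cpsf (supP X)).app q₁ Ξ') (c.app q0 σ0))
    have hPτ : P₀ ≤ Quantaloid.rda (τ.1 q0 (c.app q0 σ0)) ((c.app q0 σ0).1 p x) := by
      refine le_trans (yoneda_le x (pc.app qτ τ)) ?_
      have h3 : (pc.app qτ τ).1 p x
          ≤ Quantaloid.rda (τ.1 q0 (c.app q0 σ0)) ((c.app q0 (c.app q0 σ0)).1 p x) :=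
        le_trans (iInf_le _ q0) (iInf_le _ (c.app q0 σ0))
      rwa [hccpt q0 σ0] at h3
    calc Q.comp (Θ.1 q0 hσ0) (Q.comp (Q.comp A B) P₀)
        = Q.comp (Q.comp (Q.comp (Θ.1 q0 hσ0) A) B) P₀ := by
          rw [Q.comp_assoc, Q.comp_assoc, Q.comp_assoc]
      _ ≤ Q.comp (τ.1 q0 (c.app q0 σ0))
            (Quantaloid.rda (τ.1 q0 (c.app q0 σ0)) ((c.app q0 σ0).1 p x)) :=
          Quantaloid.comp_le_comp
            (le_trans (Quantaloid.comp_le_comp hTA le_rfl) hXB) hPτ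
      _ ≤ (c.app q0 σ0).1 p x := comp_rda_le _ _

theorem extens (X : QCat Q) (p : QFun X.P.Pd X.P) (hp : IsAlgPdP X p)
    {s : Q.Obj} (σ : X.P.el s) {p' : Q.Obj} (x' : X.el p') :
    σ.1 p' x' ≤ (p.app s ((QCat.yd X.P).app s σ)).1 p' x' := by
  set c := p.comp (QCat.yd X.P) with hc
  have h0 : Q.idm p' ≤ (c.app p' (X.y.app p' x')).1 p' x' :=
    le_trans (X.refl p' x') (le_P_iff.mp (hp.1 p' x') p' x')
  calc σ.1 p' x' = Q.comp (σ.1 p' x') (Q.idm p') := (Q.comp_idm _).symm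
    _ ≤ Q.comp (X.P.hom p' s (X.y.app p' x') σ) ((c.app p' (X.y.app p' x')).1 p' x') :=
        Quantaloid.comp_le_comp (le_yoneda x' σ) h0
    _ ≤ Q.comp (X.P.hom p' s (c.app p' (X.y.app p' x')) (c.app s σ))
          ((c.app p' (X.y.app p' x')).1 p' x') :=
        Quantaloid.comp_le_comp (c.mono p' s (X.y.app p' x') σ) le_rfl
    _ ≤ (c.app s σ).1 p' x' := Phom_comp_le _ _ _

theorem p_le_cls (X : QCat Q) (p : QFun X.P.Pd X.P) {s : Q.Obj} (τ : X.P.Pd.el s)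
    {pp : Q.Obj} (x : X.el pp) :
    (p.app s τ).1 pp x ≤ ((clsAlg X (p.comp (QCat.yd X.P))).app s τ).1 pp x := by
  refine le_iInf fun qσ => le_iInf fun σ => Quantaloid.le_rda.mp ?_
  refine le_trans (Quantaloid.comp_le_comp
    (le_trans (le_coyoneda (X := X.P) τ σ)
      (p.mono s qσ τ ((QCat.yd X.P).app qσ σ))) le_rfl) ?_
  exact Phom_comp_le (p.app s τ) (p.app qσ ((QCat.yd X.P).app qσ σ)) x

theorem G1 (X : QCat Q) (p : QFun X.P.Pd X.P) (hp : IsAlgPdP X p)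
    {s : Q.Obj} (τ : X.P.Pd.el s) {pp : Q.Obj} (x : X.el pp) :
    ((p.comp (QCat.yd X.P)).app s
        ((clsAlg X (p.comp (QCat.yd X.P))).app s τ)).1 pp x
      ≤ (p.app s τ).1 pp x := by
  set c := p.comp (QCat.yd X.P) with hcdef
  set σ1 := (clsAlg X c).app s τ with hσ1
  set hF := (QCat.y X.P.Pd).comp (QCat.yd X.P) with hhF
  set Θ := (cpsf hF).app s τ with hΘdef
  set Θ' := (cpsf (pshf p)).app s Θ with hΘ'
  -- (a) Sdmult Θ ≤ τ in P†PX, hence p (Sdmult Θ) ≤ p τ pointwise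
  have ha : ∀ q (σ : X.P.el q), τ.1 q σ ≤ ((Sdmult X).app s Θ).1 q σ := by
    intro q σ
    rw [Sdmult_val, hΘdef, cpsf_val]
    refine le_trans (le_comp_left (show Q.idm q ≤ X.P.Pd.P.hom q q (hF.app q σ)
      ((QCat.y X.P.Pd).app q ((QCat.yd X.P).app q σ)) from X.P.Pd.P.refl q _) _) ?_
    exact le_iSup₂_of_le q σ le_rfl
  have hpa : ∀ p' (x' : X.el p'),
      (p.app s ((Sdmult X).app s Θ)).1 p' x' ≤ (p.app s τ).1 p' x' := by
    have h1 : Q.idm s ≤ X.P.Pd.hom s s ((Sdmult X).app s Θ) τ := le_Pd_iff.mpr ha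
    exact le_P_iff.mp (le_trans h1 (p.mono s s ((Sdmult X).app s Θ) τ))
  -- the distinguished copresheaf on PPX : evaluation at σ1
  set Ξs : X.P.P.Pd.el s :=
    ⟨fun q'' Sg => Sg.1 s σ1, fun q'' q''' Sg Sg' => Phom_comp_le (X := X.P) Sg Sg' σ1⟩
    with hΞs
  -- A-star : idm ≤ hom(Ξs, Θ')
  have hAs : Q.idm s ≤ X.P.P.Pd.hom s s Ξs Θ' := by
    refine le_Pd_iff.mpr fun q'' Sg => ?_
    rw [hΘ', cpsf_val]
    refine iSup₂_le fun q' Ξ => ?_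
    rw [hΘdef, cpsf_val, Quantaloid.comp_iSup]
    refine iSup_le fun qρ => ?_
    rw [Quantaloid.comp_iSup]
    refine iSup_le fun ρ => ?_
    -- comp(hom(FΞ, Sg), comp(hom(hF ρ, Ξ), τ ρ)) ≤ Sg.1 s σ1
    have hyc : ∀ qρ' (ρ' : X.P.el qρ'),
        (X.P.y.app qρ (c.app qρ ρ)).1 qρ' ρ'
          ≤ ((pshf p).app qρ (hF.app qρ ρ)).1 qρ' ρ' := by
      intro qρ' ρ'
      rw [pshf_val]
      refine le_trans (le_comp_left (show Q.idm qρ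
        ≤ ((hF.app qρ ρ).1 qρ ((QCat.yd X.P).app qρ ρ)) from
          X.P.Pd.refl qρ ((QCat.yd X.P).app qρ ρ)) _) ?_
      exact le_iSup₂_of_le qρ ((QCat.yd X.P).app qρ ρ) le_rfl
    have h2 : Q.comp (X.P.P.hom q' q'' ((pshf p).app q' Ξ) Sg)
          (X.P.Pd.P.hom qρ q' (hF.app qρ ρ) Ξ)
        ≤ Sg.1 qρ (c.app qρ ρ) := by
      refine le_trans (Quantaloid.comp_le_comp le_rfl
        ((pshf p).mono qρ q' (hF.app qρ ρ) Ξ)) ?_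
      refine le_trans (X.P.P.hom_comp_le ((pshf p).app qρ (hF.app qρ ρ))
        ((pshf p).app q' Ξ) Sg) ?_
      refine le_trans (Phom_anti (X := X.P) hyc) ?_
      exact yoneda_le (X := X.P) (c.app qρ ρ) Sg
    have h3 : τ.1 qρ ρ ≤ X.P.hom s qρ σ1 (c.app qρ ρ) := by
      refine le_Phom fun p' x' => ?_
      exact Quantaloid.le_rda.mpr
        (le_trans (iInf_le _ qρ) (iInf_le _ ρ))
    calc Q.comp (X.P.P.hom q' q'' ((pshf p).app q' Ξ) Sg)
          (Q.comp (X.P.Pd.P.hom qρ q' (hF.app qρ ρ) Ξ) (τ.1 qρ ρ))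
        = Q.comp (Q.comp (X.P.P.hom q' q'' ((pshf p).app q' Ξ) Sg)
            (X.P.Pd.P.hom qρ q' (hF.app qρ ρ) Ξ)) (τ.1 qρ ρ) := (Q.comp_assoc _ _ _).symm
      _ ≤ Q.comp (Sg.1 qρ (c.app qρ ρ)) (X.P.hom s qρ σ1 (c.app qρ ρ)) :=
          Quantaloid.comp_le_comp h2 h3
      _ ≤ Sg.1 s σ1 := Sg.2 s qρ σ1 (c.app qρ ρ)
  -- B-star : idm ≤ hom(yd σ1, cpsf (supP X) Ξs)
  have hBs : Q.idm s ≤ X.P.Pd.hom s s ((QCat.yd X.P).app s σ1)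
      ((cpsf (supP X)).app s Ξs) := by
    refine le_Pd_iff.mpr fun qσ' σ' => ?_
    rw [cpsf_val]
    refine iSup₂_le fun q'' Sg => ?_
    -- comp(hom(sup Sg, σ'), Sg.1 s σ1) ≤ hom(σ1, σ')
    have h1 : Sg.1 s σ1 ≤ X.P.hom s q'' σ1 ((supP X).app q'' Sg) := by
      refine le_trans (le_yoneda (X := X.P) σ1 Sg) ?_
      refine le_trans ((supP X).mono s q'' (X.P.y.app s σ1) Sg) ?_
      refine Phom_anti fun p' x' => ?_
      rw [supP_val]
      exact le_yoneda x' σ1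
    refine le_trans (Quantaloid.comp_le_comp le_rfl h1) ?_
    exact X.P.hom_comp_le σ1 ((supP X).app q'' Sg) σ'
  -- assemble the lower bound of LHS of law (g) at Θ
  have hg := le_P_iff.mp (hp.2 s Θ) pp x
  refine le_trans ?_ (le_trans hg (hpa pp x))
  rw [show ((supP X).comp ((pshf p).comp ((LamPdP X).comp (cpsf (pshf p))))).app s Θ
      = (supP X).app s ((pshf p).app s ((LamPdP X).app s Θ')) from rfl]
  rw [supP_val, pshf_val]
  refine le_trans ?_ (le_iSup₂_of_le s ((QCat.yd X.P).app s σ1) le_rfl)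
  have hΛ : Q.idm s ≤ ((LamPdP X).app s Θ').1 s ((QCat.yd X.P).app s σ1) := by
    rw [LamPdP_val]
    refine le_trans ?_ (le_iSup₂_of_le s Ξs le_rfl)
    exact idm_le_comp hAs hBs
  calc (c.app s σ1).1 pp x
      = Q.comp (Q.idm s) ((c.app s σ1).1 pp x) := (Q.idm_comp _).symm
    _ ≤ Q.comp (((LamPdP X).app s Θ').1 s ((QCat.yd X.P).app s σ1))
          (X.P.hom pp s (X.y.app pp x) (p.app s ((QCat.yd X.P).app s σ1))) :=
        Quantaloid.comp_le_comp hΛ (le_yoneda x (p.app s ((QCat.yd X.P).app s σ1)))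

theorem partB (X : QCat Q) (p : QFun X.P.Pd X.P) (hp : IsAlgPdP X p) :
    ∃! c : QFun X.P X.P, IsClosureOp X.P c ∧ clsAlg X c = p := by
  set c := p.comp (QCat.yd X.P) with hcdef
  have hext : QFun.id X.P ≤ c := fun s σ => le_P_iff.mpr fun p' x' => extens X p hp σ x'
  have hclsp : clsAlg X c = p := by
    refine QFun.ext' fun s τ => Pel_ext fun pp x => le_antisymm ?_ ?_
    · -- clsAlg c τ ≤ p τ : via extensivity at σ1 and G1
      refine le_trans ?_ (G1 X p hp τ x)
      exact extens X p hp ((clsAlg X c).app s τ) x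
    · exact p_le_cls X p τ x
  have hidem : c.comp c = c := by
    refine QFun.ext' fun s σ => ?_
    have h1 : (clsAlg X c).app s ((QCat.yd X.P).app s σ) = c.app s σ := clsAlg_yd X c σ
    refine Pel_ext fun pp x => le_antisymm ?_ ?_
    · -- c (c σ) ≤ c σ
      have h2 := G1 X p hp ((QCat.yd X.P).app s σ) (pp := pp) x
      rw [h1] at h2
      exact h2
    · exact extens X p hp (c.app s σ) x
  refine ⟨c, ⟨⟨hext, hidem⟩, hclsp⟩, ?_⟩
  rintro c' ⟨_, he⟩
  refine QFun.ext' fun s σ => ?_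
  have h1 : (clsAlg X c').app s ((QCat.yd X.P).app s σ) = c'.app s σ := clsAlg_yd X c' σ
  rw [he] at h1
  exact h1.symm

theorem part3 (X Y : QCat Q) (c : QFun X.P X.P) (d : QFun Y.P Y.P) (f : QFun X Y) :
    (pshf f).comp (clsAlg X c) ≤ (clsAlg Y d).comp (cpsf (pshf f)) ↔
      (pshf f).comp c ≤ d.comp (pshf f) := by
  constructor
  · intro H s σ
    refine le_P_iff.mpr fun q y => ?_
    have h1 := le_P_iff.mp (H s ((QCat.yd X.P).app s σ)) q y
    rw [show ((pshf f).comp (clsAlg X c)).app s ((QCat.yd X.P).app s σ)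
        = (pshf f).app s ((clsAlg X c).app s ((QCat.yd X.P).app s σ)) from rfl,
      clsAlg_yd X c σ] at h1
    refine le_trans h1 ?_
    -- clsAlg d ((cpsf F)(yd σ)) ≤ d (F σ) pointwise
    have h2 : Q.idm s ≤ ((cpsf (pshf f)).app s ((QCat.yd X.P).app s σ)).1 s
        ((pshf f).app s σ) := by
      rw [cpsf_val]
      refine le_trans (idm_le_comp (Y.P.refl s ((pshf f).app s σ)) (X.P.refl s σ)) ?_
      exact le_iSup₂_of_le s σ le_rfl
    refine le_trans (le_trans (iInf_le _ s) (iInf_le _ ((pshf f).app s σ))) ?_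
    exact rda_le_of_idm h2 _
  · intro K s τ
    refine le_P_iff.mpr fun q y => ?_
    refine le_iInf fun qρ => le_iInf fun ρ => Quantaloid.le_rda.mp ?_
    rw [cpsf_val, Quantaloid.iSup_comp]
    refine iSup_le fun qσ => ?_
    rw [Quantaloid.iSup_comp]
    refine iSup_le fun σ => ?_
    -- comp(comp(hom(Fσ,ρ), τ σ), (F (clsAlg c τ)) q y) ≤ (d ρ) q y
    have hinner : Q.comp (τ.1 qσ σ)
        (((pshf f).app s ((clsAlg X c).app s τ)).1 q y)
        ≤ ((pshf f).app qσ (c.app qσ σ)).1 q y := by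
      rw [pshf_val, Quantaloid.comp_iSup]
      refine iSup_le fun px' => ?_
      rw [Quantaloid.comp_iSup]
      refine iSup_le fun x' => ?_
      rw [← Q.comp_assoc]
      have h3 : Q.comp (τ.1 qσ σ) (((clsAlg X c).app s τ).1 px' x')
          ≤ (c.app qσ σ).1 px' x' :=
        Quantaloid.le_rda.mpr (le_trans (iInf_le _ qσ) (iInf_le _ σ))
      refine le_trans (Quantaloid.comp_le_comp h3 le_rfl) ?_
      rw [pshf_val]
      exact le_iSup₂_of_le px' x' le_rfl
    have hK := le_P_iff.mp (K qσ σ) q y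
    calc Q.comp (Q.comp (Y.P.hom qσ qρ ((pshf f).app qσ σ) ρ) (τ.1 qσ σ))
          (((pshf f).app s ((clsAlg X c).app s τ)).1 q y)
        = Q.comp (Y.P.hom qσ qρ ((pshf f).app qσ σ) ρ)
            (Q.comp (τ.1 qσ σ)
              (((pshf f).app s ((clsAlg X c).app s τ)).1 q y)) := Q.comp_assoc _ _ _
      _ ≤ Q.comp (Y.P.hom qσ qρ ((pshf f).app qσ σ) ρ)
            ((d.app qσ ((pshf f).app qσ σ)).1 q y) :=
          Quantaloid.comp_le_comp le_rfl (le_trans hinner hK)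
      _ ≤ Q.comp (Y.P.hom qσ qρ (d.app qσ ((pshf f).app qσ σ)) (d.app qρ ρ))
            ((d.app qσ ((pshf f).app qσ σ)).1 q y) :=
          Quantaloid.comp_le_comp (d.mono qσ qρ ((pshf f).app qσ σ) ρ) le_rfl
      _ ≤ (d.app qρ ρ).1 q y := Phom_comp_le _ _ _

end Stmt13Aux

/-- for the flat distributive law `Λ†` of `𝔓†𝔓` over `𝔓`,
`(Λ†,Q)-Alg ≅ Q-Cls`: lax `Λ†`-algebra structures `p : P†PX → PX` correspond
bijectively to `Q`-closure operations on `PX`, and lax `Λ†`-homomorphisms are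
exactly the continuous `Q`-functors of `Q`-closure spaces. -/
theorem statement13 (Q : Quantaloid.{u}) :
    (∀ (X : QCat Q) (c : QFun X.P X.P), IsClosureOp X.P c → IsAlgPdP X (clsAlg X c)) ∧
    (∀ (X : QCat Q) (p : QFun X.P.Pd X.P), IsAlgPdP X p →
      ∃! c : QFun X.P X.P, IsClosureOp X.P c ∧ clsAlg X c = p) ∧
    (∀ (X Y : QCat Q) (c : QFun X.P X.P) (d : QFun Y.P Y.P) (f : QFun X Y),
      IsClosureOp X.P c → IsClosureOp Y.P d →
      ((pshf f).comp (clsAlg X c) ≤ (clsAlg Y d).comp (cpsf (pshf f)) ↔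
        (pshf f).comp c ≤ d.comp (pshf f))) := by
  refine ⟨partA, partB, fun X Y c d f _ _ => part3 X Y c d f⟩

end QT
end

section
/- Let T be a 2-functor on Q-Cat and let (T̂φ:TX⇸TY)_{φ:X⇸Y} be a family of Q-distributors satisfying (1) φ ≤ φ' implies T̂φ ≤ T̂φ' and (2) T̂ψ∘T̂φ ≤ T̂(ψ∘φ). Then the following conditions, quantified over all Q-functors f:X→Y and all Q-distributors φ:Z⇸Y, ψ:Y⇸Z, are equivalent: (i) 1_{TX}^* ≤ T̂(1_X^*) and T̂(f^*∘φ) = (Tf)^*∘T̂φ; (ii) 1_{TX}^* ≤ T̂(1_X^*) and T̂(ψ∘f_*) = T̂ψ∘(Tf)_*; (iii) (Tf)_* ≤ T̂(f_*) and (Tf)^* ≤ T̂(f^*). -/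
/-!
Common framework: quantaloids, `Q`-categories, `Q`-functors, `Q`-distributors,
(co)presheaf constructions, 2-monads on `Q`-Cat, lax distributive laws over the
presheaf 2-monad, and lax extensions to `Q`-Dist.
-/

set_option autoImplicit false

universe u

namespace QT

variable {Q : Quantaloid.{u}}

section Statement14Aux

variable {Q' : Quantaloid.{u}}

theorem QDist.ext' {X Y : QCat Q'} {φ ψ : QDist X Y} (h : φ.rel = ψ.rel) : φ = ψ := by
  cases φ; cases ψ; cases h; rfl

theorem QDist.comp_mono {X Y Z : QCat Q'} {ψ ψ' : QDist Y Z} {φ φ' : QDist X Y}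
    (hψ : ψ ≤ ψ') (hφ : φ ≤ φ') : ψ.comp φ ≤ ψ'.comp φ' :=
  QRel.comp_mono hψ hφ

theorem QDist.comp_assoc' {W X Y Z : QCat Q'} (χ : QDist Y Z) (ψ : QDist X Y) (φ : QDist W X) :
    (χ.comp ψ).comp φ = χ.comp (ψ.comp φ) :=
  QDist.ext' (QRel.comp_assoc _ _ _)

theorem QDist.le_comp_homDist {X Y : QCat Q'} (φ : QDist X Y) : φ ≤ φ.comp X.homDist :=
  QRel.le_comp_hom φ.rel

theorem QDist.le_homDist_comp {X Y : QCat Q'} (φ : QDist X Y) : φ ≤ Y.homDist.comp φ :=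
  QRel.le_hom_comp φ.rel

theorem QDist.comp_homDist_le' {X Y : QCat Q'} (φ : QDist X Y) : φ.comp X.homDist ≤ φ :=
  φ.comp_hom_le

theorem QDist.homDist_comp_le' {X Y : QCat Q'} (φ : QDist X Y) : Y.homDist.comp φ ≤ φ :=
  φ.hom_comp_le

theorem QFun.graph_unit {X Y : QCat Q'} (f : QFun X Y) :
    X.homDist ≤ f.cograph.comp f.graph := by
  intro p q x x'
  have h : X.hom p q x x' ≤
      Q'.comp (Y.hom p q (f.app p x) (f.app q x')) (Y.hom p p (f.app p x) (f.app p x)) :=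
    calc X.hom p q x x' ≤ Y.hom p q (f.app p x) (f.app q x') := f.mono _ _ _ _
      _ = Q'.comp (Y.hom p q (f.app p x) (f.app q x')) (Q'.idm p) := (Q'.comp_idm _).symm
      _ ≤ _ := Quantaloid.comp_le_comp le_rfl (Y.refl p _)
  exact le_trans h (le_iSup_of_le p (le_iSup_of_le (f.app p x) le_rfl))

theorem QFun.graph_counit {X Y : QCat Q'} (f : QFun X Y) :
    f.graph.comp f.cograph ≤ Y.homDist := by
  intro p q y y'
  exact iSup₂_le fun r x => Y.hom_comp_le y (f.app r x) y'

theorem QFun.id_graph (X : QCat Q') : (QFun.id X).graph = X.homDist :=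
  QDist.ext' rfl

end Statement14Aux

/-- for a 2-functor `T` on `Q`-Cat and a family `T̂` of distributors
satisfying (1) monotonicity and (2) lax functoriality, the conditions
(i) `1_{TX}^* ≤ T̂ 1_X^*` and `T̂(f^* ∘ φ) = (Tf)^* ∘ T̂φ`,
(ii) `1_{TX}^* ≤ T̂ 1_X^*` and `T̂(ψ ∘ f_*) = T̂ψ ∘ (Tf)_*`, and
(iii) `(Tf)_* ≤ T̂(f_*)` and `(Tf)^* ≤ T̂(f^*)`
are equivalent. -/
theorem statement14 (Q : Quantaloid.{u}) (T : TwoFunctor Q) (ext : ExtFamily T)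
    (h1 : ∀ (X Y : QCat Q) (φ φ' : QDist X Y), φ ≤ φ' → ext φ ≤ ext φ')
    (h2 : ∀ (X Y Z : QCat Q) (φ : QDist X Y) (ψ : QDist Y Z),
      (ext ψ).comp (ext φ) ≤ ext (ψ.comp φ)) :
    -- (i) ↔ (iii)
    ((((∀ X : QCat Q, (T.obj X).homDist ≤ ext X.homDist) ∧
       (∀ (X Y Z : QCat Q) (f : QFun X Y) (φ : QDist Z Y),
         ext (f.cograph.comp φ) = ((T.map f).cograph).comp (ext φ)))) ↔
      (∀ (X Y : QCat Q) (f : QFun X Y),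
        (T.map f).graph ≤ ext f.graph ∧ (T.map f).cograph ≤ ext f.cograph)) ∧
    -- (ii) ↔ (iii)
    ((((∀ X : QCat Q, (T.obj X).homDist ≤ ext X.homDist) ∧
       (∀ (X Y Z : QCat Q) (f : QFun X Y) (ψ : QDist Y Z),
         ext (ψ.comp f.graph) = (ext ψ).comp (T.map f).graph))) ↔
      (∀ (X Y : QCat Q) (f : QFun X Y),
        (T.map f).graph ≤ ext f.graph ∧ (T.map f).cograph ≤ ext f.cograph)) := by
  -- (iii) implies the identity part common to (i) and (ii)
  have hid : (∀ (X Y : QCat Q) (f : QFun X Y),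
      (T.map f).graph ≤ ext f.graph ∧ (T.map f).cograph ≤ ext f.cograph) →
      ∀ X : QCat Q, (T.obj X).homDist ≤ ext X.homDist := by
    intro h3 X
    have h := (h3 X X (QFun.id X)).1
    rw [T.map_id, QFun.id_graph, QFun.id_graph] at h
    exact h
  constructor
  · constructor
    · -- (i) → (iii)
      rintro ⟨hi1, hi2⟩ X Y f
      constructor
      · calc (T.map f).graph
            ≤ (T.map f).graph.comp (T.obj X).homDist := QDist.le_comp_homDist _
          _ ≤ (T.map f).graph.comp (ext X.homDist) := QDist.comp_mono le_rfl (hi1 X)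
          _ ≤ (T.map f).graph.comp (ext (f.cograph.comp f.graph)) :=
              QDist.comp_mono le_rfl (h1 _ _ _ _ (QFun.graph_unit f))
          _ = (T.map f).graph.comp ((T.map f).cograph.comp (ext f.graph)) := by
              rw [hi2 X Y X f f.graph]
          _ = ((T.map f).graph.comp (T.map f).cograph).comp (ext f.graph) :=
              (QDist.comp_assoc' _ _ _).symm
          _ ≤ (T.obj Y).homDist.comp (ext f.graph) :=
              QDist.comp_mono (QFun.graph_counit _) le_rfl
          _ ≤ ext f.graph := QDist.homDist_comp_le' _
      · calc (T.map f).cograph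
            ≤ (T.map f).cograph.comp (T.obj Y).homDist := QDist.le_comp_homDist _
          _ ≤ (T.map f).cograph.comp (ext Y.homDist) := QDist.comp_mono le_rfl (hi1 Y)
          _ = ext (f.cograph.comp Y.homDist) := (hi2 X Y Y f Y.homDist).symm
          _ ≤ ext f.cograph := h1 _ _ _ _ (QDist.comp_homDist_le' _)
    · -- (iii) → (i)
      intro h3
      refine ⟨hid h3, fun X Y Z f φ => ?_⟩
      apply le_antisymm
      · calc ext (f.cograph.comp φ)
            ≤ (T.obj X).homDist.comp (ext (f.cograph.comp φ)) := QDist.le_homDist_comp _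
          _ ≤ ((T.map f).cograph.comp (T.map f).graph).comp (ext (f.cograph.comp φ)) :=
              QDist.comp_mono (QFun.graph_unit _) le_rfl
          _ = (T.map f).cograph.comp ((T.map f).graph.comp (ext (f.cograph.comp φ))) :=
              QDist.comp_assoc' _ _ _
          _ ≤ (T.map f).cograph.comp ((ext f.graph).comp (ext (f.cograph.comp φ))) :=
              QDist.comp_mono le_rfl (QDist.comp_mono (h3 X Y f).1 le_rfl)
          _ ≤ (T.map f).cograph.comp (ext (f.graph.comp (f.cograph.comp φ))) :=
              QDist.comp_mono le_rfl (h2 _ _ _ _ _)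
          _ ≤ (T.map f).cograph.comp (ext φ) := by
              refine QDist.comp_mono le_rfl (h1 _ _ _ _ ?_)
              calc f.graph.comp (f.cograph.comp φ)
                  = (f.graph.comp f.cograph).comp φ := (QDist.comp_assoc' _ _ _).symm
                _ ≤ Y.homDist.comp φ := QDist.comp_mono (QFun.graph_counit f) le_rfl
                _ ≤ φ := QDist.homDist_comp_le' φ
      · calc (T.map f).cograph.comp (ext φ)
            ≤ (ext f.cograph).comp (ext φ) := QDist.comp_mono (h3 X Y f).2 le_rfl
          _ ≤ ext (f.cograph.comp φ) := h2 _ _ _ _ _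
  · constructor
    · -- (ii) → (iii)
      rintro ⟨hii1, hii2⟩ X Y f
      constructor
      · calc (T.map f).graph
            ≤ (T.obj Y).homDist.comp (T.map f).graph := QDist.le_homDist_comp _
          _ ≤ (ext Y.homDist).comp (T.map f).graph := QDist.comp_mono (hii1 Y) le_rfl
          _ = ext (Y.homDist.comp f.graph) := (hii2 X Y Y f Y.homDist).symm
          _ ≤ ext f.graph := h1 _ _ _ _ (QDist.homDist_comp_le' _)
      · calc (T.map f).cograph
            ≤ (T.obj X).homDist.comp (T.map f).cograph := QDist.le_homDist_comp _
          _ ≤ (ext X.homDist).comp (T.map f).cograph := QDist.comp_mono (hii1 X) le_rfl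
          _ ≤ (ext (f.cograph.comp f.graph)).comp (T.map f).cograph :=
              QDist.comp_mono (h1 _ _ _ _ (QFun.graph_unit f)) le_rfl
          _ = ((ext f.cograph).comp (T.map f).graph).comp (T.map f).cograph := by
              rw [hii2 X Y X f f.cograph]
          _ = (ext f.cograph).comp ((T.map f).graph.comp (T.map f).cograph) :=
              QDist.comp_assoc' _ _ _
          _ ≤ (ext f.cograph).comp (T.obj Y).homDist :=
              QDist.comp_mono le_rfl (QFun.graph_counit _)
          _ ≤ ext f.cograph := QDist.comp_homDist_le' _
    · -- (iii) → (ii)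
      intro h3
      refine ⟨hid h3, fun X Y Z f ψ => ?_⟩
      apply le_antisymm
      · calc ext (ψ.comp f.graph)
            ≤ (ext (ψ.comp f.graph)).comp (T.obj X).homDist := QDist.le_comp_homDist _
          _ ≤ (ext (ψ.comp f.graph)).comp ((T.map f).cograph.comp (T.map f).graph) :=
              QDist.comp_mono le_rfl (QFun.graph_unit _)
          _ = ((ext (ψ.comp f.graph)).comp (T.map f).cograph).comp (T.map f).graph :=
              (QDist.comp_assoc' _ _ _).symm
          _ ≤ ((ext (ψ.comp f.graph)).comp (ext f.cograph)).comp (T.map f).graph :=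
              QDist.comp_mono (QDist.comp_mono le_rfl (h3 X Y f).2) le_rfl
          _ ≤ (ext ((ψ.comp f.graph).comp f.cograph)).comp (T.map f).graph :=
              QDist.comp_mono (h2 _ _ _ _ _) le_rfl
          _ ≤ (ext ψ).comp (T.map f).graph := by
              refine QDist.comp_mono (h1 _ _ _ _ ?_) le_rfl
              calc (ψ.comp f.graph).comp f.cograph
                  = ψ.comp (f.graph.comp f.cograph) := QDist.comp_assoc' _ _ _
                _ ≤ ψ.comp Y.homDist := QDist.comp_mono le_rfl (QFun.graph_counit f)
                _ ≤ ψ := QDist.comp_homDist_le' ψ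
      · calc (ext ψ).comp (T.map f).graph
            ≤ (ext ψ).comp (ext f.graph) := QDist.comp_mono le_rfl (h3 X Y f).1
          _ ≤ ext (ψ.comp f.graph) := h2 _ _ _ _ _

end QT
end

section
/- For any 2-functor T on Q-Cat, lax extensions of T to Q-Dist correspond bijectively to families λ = (λ_X:TPX→PTX)_X of Q-functors satisfying the lax naturality law (a), the lax P-unit law (b), and the lax P-multiplication law (c); the bijection sends λ to the lax extension T̂ with ←(T̂φ) = λ_X·T(←φ), and conversely sends a lax extension T̂ to λ with λ_X = ←(T̂((y_X)_*)). -/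
/-!
Common framework: quantaloids, `Q`-categories, `Q`-functors, `Q`-distributors,
(co)presheaf constructions, 2-monads on `Q`-Cat, lax distributive laws over the
presheaf 2-monad, and lax extensions to `Q`-Dist.
-/

set_option autoImplicit false

universe u

namespace QT

variable {Q : Quantaloid.{u}}

/-! ### Auxiliary lemmas for Statement 15 -/

theorem QFun.ext_app {X Y : QCat Q} {f g : QFun X Y} (h : f.app = g.app) : f = g := by
  cases f; cases g; cases h; rfl

theorem phom_eval {X : QCat Q} {s s' : Q.Obj} (σ : X.P.el s) (σ' : X.P.el s')
    (p : Q.Obj) (x : X.el p) :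
    Q.comp (X.P.hom s s' σ σ') (σ.1 p x) ≤ σ'.1 p x :=
  Quantaloid.le_lda.mpr (le_trans (iInf_le _ p) (iInf_le _ x))

theorem idm_le_phom_iff {X : QCat Q} {s : Q.Obj} {σ σ' : X.P.el s} :
    Q.idm s ≤ X.P.hom s s σ σ' ↔ ∀ p (x : X.el p), σ.1 p x ≤ σ'.1 p x := by
  constructor
  · intro h p x
    calc σ.1 p x = Q.comp (Q.idm s) (σ.1 p x) := (Q.idm_comp _).symm
      _ ≤ Q.comp (X.P.hom s s σ σ') (σ.1 p x) := Quantaloid.comp_le_comp h le_rfl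
      _ ≤ σ'.1 p x := phom_eval σ σ' p x
  · intro h
    refine le_iInf fun p => le_iInf fun x => Quantaloid.le_lda.mp ?_
    rw [Q.idm_comp]; exact h p x

theorem yoneda_hom {X : QCat Q} {p s : Q.Obj} (x : X.el p) (σ : X.P.el s) :
    X.P.hom p s (X.y.app p x) σ = σ.1 p x := by
  apply le_antisymm
  · have h1 : X.P.hom p s (X.y.app p x) σ ≤ Quantaloid.lda (σ.1 p x) (X.hom p p x x) :=
      le_trans (iInf_le _ p) (iInf_le _ x)
    calc X.P.hom p s (X.y.app p x) σ
        = Q.comp (X.P.hom p s (X.y.app p x) σ) (Q.idm p) := (Q.comp_idm _).symm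
      _ ≤ Q.comp (Quantaloid.lda (σ.1 p x) (X.hom p p x x)) (X.hom p p x x) :=
          Quantaloid.comp_le_comp h1 (X.refl p x)
      _ ≤ σ.1 p x := Quantaloid.le_lda.mpr le_rfl
  · refine le_iInf fun q => le_iInf fun x' => Quantaloid.le_lda.mp ?_
    exact σ.2 q p x' x

theorem papp_mono' {W B : QCat Q} (h : QFun W B.P) {s : Q.Obj} {a b : W.el s}
    (hab : Q.idm s ≤ W.hom s s a b) (p : Q.Obj) (x : B.el p) :
    (h.app s a).1 p x ≤ (h.app s b).1 p x :=
  idm_le_phom_iff.mp (le_trans hab (h.mono s s a b)) p x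

theorem papp_mono {A B : QCat Q} (h : QFun A.P B.P) {s : Q.Obj} {σ σ' : A.P.el s}
    (hs : ∀ p (x : A.el p), σ.1 p x ≤ σ'.1 p x) (p : Q.Obj) (x : B.el p) :
    (h.app s σ).1 p x ≤ (h.app s σ').1 p x :=
  papp_mono' h (idm_le_phom_iff.mpr hs) p x

theorem qfun_le_iff {W B : QCat Q} {f g : QFun W B.P} :
    f ≤ g ↔ ∀ s (z : W.el s) p (x : B.el p), (f.app s z).1 p x ≤ (g.app s z).1 p x :=
  ⟨fun h s z => idm_le_phom_iff.mp (h s z), fun h s z => idm_le_phom_iff.mpr (h s z)⟩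

theorem QDist.rel_mono_right {A B : QCat Q} (E : QDist A B) {p q : Q.Obj} (a : A.el p)
    {b b' : B.el q} (h : Q.idm q ≤ B.hom q q b b') : E.rel p q a b ≤ E.rel p q a b' := by
  calc E.rel p q a b = Q.comp (Q.idm q) (E.rel p q a b) := (Q.idm_comp _).symm
    _ ≤ Q.comp (B.hom q q b b') (E.rel p q a b) := Quantaloid.comp_le_comp h le_rfl
    _ ≤ E.rel p q a b' := E.hom_comp_rel a b b'

theorem transpose_untranspose {X Y : QCat Q} (g : QFun Y X.P) :
    (QFun.untranspose g).transpose = g := by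
  apply QFun.ext_app; funext q y; apply Subtype.ext; rfl

theorem transpose_y_graph (X : QCat Q) : (QCat.y X).graph.transpose = QFun.id X.P := by
  apply QFun.ext_app; funext s σ; apply Subtype.ext; funext p x
  exact yoneda_hom x σ

theorem transpose_cograph {X Y : QCat Q} (f : QFun X Y) :
    f.cograph.transpose = (QCat.y Y).comp f := by
  apply QFun.ext_app; funext q x; apply Subtype.ext; rfl

theorem QFun.comp_id {X Y : QCat Q} (f : QFun X Y) : f.comp (QFun.id X) = f := by
  apply QFun.ext_app; rfl

theorem transpose_comp {X Y Z : QCat Q} (ψ : QDist Y Z) (φ : QDist X Y) :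
    (ψ.comp φ).transpose = φ.fwd.comp ψ.transpose := by
  apply QFun.ext_app; funext r z; apply Subtype.ext; rfl


theorem y_graph_rel {X : QCat Q} {p q : Q.Obj} (x : X.el p) (σ : X.P.el q) :
    X.y.graph.rel p q x σ = σ.1 p x :=
  yoneda_hom x σ

theorem fwd_eq_sup_pshf {X Y : QCat Q} (φ : QDist X Y) :
    φ.fwd = (supP X).comp (pshf φ.transpose) := by
  apply QFun.ext_app; funext s τ; apply Subtype.ext; funext p x
  have hA : ∀ (q : Q.Obj) (σ : X.P.el q), (((pshf φ.transpose).app s τ)).1 q σ =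
      ⨆ q', ⨆ y : Y.el q', Q.comp (τ.1 q' y) (X.P.hom q q' σ (φ.transpose.app q' y)) := by
    intro q σ; rfl
  show (⨆ q, ⨆ y : Y.el q, Q.comp (τ.1 q y) (φ.rel p q x y)) =
      ⨆ q, ⨆ σ : X.P.el q,
        Q.comp (((pshf φ.transpose).app s τ).1 q σ) (X.y.graph.rel p q x σ)
  apply le_antisymm
  · refine iSup₂_le fun q y => ?_
    refine le_trans ?_ (le_iSup_of_le q (le_iSup_of_le (φ.transpose.app q y) le_rfl))
    rw [y_graph_rel]
    refine Quantaloid.comp_le_comp ?_ le_rfl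
    rw [hA]
    refine le_trans ?_ (le_iSup_of_le q (le_iSup_of_le y le_rfl))
    calc τ.1 q y = Q.comp (τ.1 q y) (Q.idm q) := (Q.comp_idm _).symm
      _ ≤ Q.comp (τ.1 q y)
            (X.P.hom q q (φ.transpose.app q y) (φ.transpose.app q y)) :=
          Quantaloid.comp_le_comp le_rfl (X.P.refl q _)
  · refine iSup₂_le fun q σ => ?_
    rw [hA, y_graph_rel, Quantaloid.iSup_comp]
    refine iSup_le fun q' => ?_
    rw [Quantaloid.iSup_comp]
    refine iSup_le fun y => ?_
    rw [Q.comp_assoc]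
    refine le_iSup_of_le q' (le_iSup_of_le y (Quantaloid.comp_le_comp le_rfl ?_))
    have : Q.comp (X.P.hom q q' σ (φ.transpose.app q' y)) (σ.1 p x) ≤
        (φ.transpose.app q' y).1 p x := phom_eval σ (φ.transpose.app q' y) p x
    exact this

theorem transpose_qdistcomp {X Y Z : QCat Q} (ψ : QDist Y Z) (φ : QDist X Y) :
    (ψ.comp φ).transpose = ((supP X).comp (pshf φ.transpose)).comp ψ.transpose := by
  rw [transpose_comp, fwd_eq_sup_pshf]

section Whisker
variable {T : TwoFunctor Q} {ext : ExtFamily T}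

theorem graph_cograph_comp_le {X W V : QCat Q} (g : QFun W V) (φ : QDist X V) :
    g.graph.comp (g.cograph.comp φ) ≤ φ := by
  intro p q x v
  refine iSup₂_le fun q1 w => ?_
  have hrel : (g.cograph.comp φ).rel p q1 x w =
      ⨆ q2, ⨆ v' : V.el q2, Q.comp (V.hom q2 q1 v' (g.app q1 w)) (φ.rel p q2 x v') := rfl
  rw [hrel, Quantaloid.comp_iSup]
  refine iSup_le fun q2 => ?_
  rw [Quantaloid.comp_iSup]
  refine iSup_le fun v' => ?_
  rw [← Q.comp_assoc]
  refine le_trans (Quantaloid.comp_le_comp (V.hom_comp_le v' (g.app q1 w) v) le_rfl) ?_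
  exact φ.hom_comp_rel x v' v

theorem whisker_graph (hext : IsLaxExt T ext) {X W V : QCat Q} (g : QFun W V)
    (φ : QDist X W) {p q : Q.Obj} (x : (T.obj X).el p) (w : (T.obj W).el q) :
    (ext φ).rel p q x w ≤ (ext (g.graph.comp φ)).rel p q x ((T.map g).app q w) := by
  have h1 : (T.map g).graph ≤ ext g.graph := (hext.2.2 W V g).1
  have h2 : (ext g.graph).comp (ext φ) ≤ ext (g.graph.comp φ) := hext.2.1 X W V φ g.graph
  calc (ext φ).rel p q x w
      = Q.comp (Q.idm q) ((ext φ).rel p q x w) := (Q.idm_comp _).symm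
    _ ≤ Q.comp ((ext g.graph).rel q q w ((T.map g).app q w)) ((ext φ).rel p q x w) :=
        Quantaloid.comp_le_comp
          (le_trans ((T.obj V).refl q ((T.map g).app q w)) (h1 q q w ((T.map g).app q w)))
          le_rfl
    _ ≤ ((ext g.graph).comp (ext φ)).rel p q x ((T.map g).app q w) :=
        le_iSup_of_le q (le_iSup_of_le w le_rfl)
    _ ≤ (ext (g.graph.comp φ)).rel p q x ((T.map g).app q w) := h2 p q x _

theorem whisker_cograph_a (hext : IsLaxExt T ext) {X W V : QCat Q} (g : QFun W V)
    (φ : QDist X V) {p q : Q.Obj} (x : (T.obj X).el p) (w : (T.obj W).el q) :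
    (ext (g.cograph.comp φ)).rel p q x w ≤ (ext φ).rel p q x ((T.map g).app q w) := by
  have h1 : (T.map g).graph ≤ ext g.graph := (hext.2.2 W V g).1
  have h2 : (ext g.graph).comp (ext (g.cograph.comp φ)) ≤
      ext (g.graph.comp (g.cograph.comp φ)) := hext.2.1 X W V (g.cograph.comp φ) g.graph
  have h3 : ext (g.graph.comp (g.cograph.comp φ)) ≤ ext φ :=
    hext.1 X V _ _ (graph_cograph_comp_le g φ)
  calc (ext (g.cograph.comp φ)).rel p q x w
      = Q.comp (Q.idm q) ((ext (g.cograph.comp φ)).rel p q x w) := (Q.idm_comp _).symm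
    _ ≤ Q.comp ((ext g.graph).rel q q w ((T.map g).app q w))
          ((ext (g.cograph.comp φ)).rel p q x w) :=
        Quantaloid.comp_le_comp
          (le_trans ((T.obj V).refl q ((T.map g).app q w)) (h1 q q w ((T.map g).app q w)))
          le_rfl
    _ ≤ ((ext g.graph).comp (ext (g.cograph.comp φ))).rel p q x ((T.map g).app q w) :=
        le_iSup_of_le q (le_iSup_of_le w le_rfl)
    _ ≤ (ext (g.graph.comp (g.cograph.comp φ))).rel p q x ((T.map g).app q w) := h2 p q x _
    _ ≤ (ext φ).rel p q x ((T.map g).app q w) := h3 p q x _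

theorem whisker_cograph_b (hext : IsLaxExt T ext) {X W V : QCat Q} (g : QFun W V)
    (φ : QDist X V) {p q : Q.Obj} (x : (T.obj X).el p) (w : (T.obj W).el q) :
    (ext φ).rel p q x ((T.map g).app q w) ≤ (ext (g.cograph.comp φ)).rel p q x w := by
  have h1 : (T.map g).cograph ≤ ext g.cograph := (hext.2.2 W V g).2
  have h2 : (ext g.cograph).comp (ext φ) ≤ ext (g.cograph.comp φ) :=
    hext.2.1 X V W φ g.cograph
  calc (ext φ).rel p q x ((T.map g).app q w)
      = Q.comp (Q.idm q) ((ext φ).rel p q x ((T.map g).app q w)) := (Q.idm_comp _).symm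
    _ ≤ Q.comp ((ext g.cograph).rel q q ((T.map g).app q w) w)
          ((ext φ).rel p q x ((T.map g).app q w)) :=
        Quantaloid.comp_le_comp
          (le_trans ((T.obj V).refl q ((T.map g).app q w)) (h1 q q ((T.map g).app q w) w))
          le_rfl
    _ ≤ ((ext g.cograph).comp (ext φ)).rel p q x w :=
        le_iSup_of_le q (le_iSup_of_le ((T.map g).app q w) le_rfl)
    _ ≤ (ext (g.cograph.comp φ)).rel p q x w := h2 p q x w

end Whisker


theorem cograph_transpose_comp_le {X Y : QCat Q} (φ : QDist X Y) :
    φ.transpose.cograph.comp (QCat.y X).graph ≤ φ := by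
  intro p q x y
  have h : (φ.transpose.cograph.comp (QCat.y X).graph).rel p q x y =
      ⨆ a, ⨆ σ : X.P.el a,
        Q.comp (X.P.hom a q σ (φ.transpose.app q y)) ((QCat.y X).graph.rel p a x σ) := rfl
  rw [h]
  refine iSup₂_le fun a σ => ?_
  rw [y_graph_rel]
  exact phom_eval σ (φ.transpose.app q y) p x

theorem transpose_graph_comp_le {X Y : QCat Q} (φ : QDist X Y) :
    φ.transpose.graph.comp φ ≤ (QCat.y X).graph := by
  intro p b x σ
  have h : (φ.transpose.graph.comp φ).rel p b x σ =
      ⨆ a, ⨆ y : Y.el a,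
        Q.comp (X.P.hom a b (φ.transpose.app a y) σ) (φ.rel p a x y) := rfl
  rw [h, y_graph_rel]
  refine iSup₂_le fun a y => ?_
  exact phom_eval (φ.transpose.app a y) σ p x

theorem y_graph_comp_cograph_le {X Y : QCat Q} (f : QFun X Y) :
    (QCat.y X).graph.comp f.cograph ≤ (pshf f).cograph.comp (QCat.y Y).graph := by
  intro a b y σ
  have hL : ((QCat.y X).graph.comp f.cograph).rel a b y σ =
      ⨆ p, ⨆ x : X.el p,
        Q.comp ((QCat.y X).graph.rel p b x σ) (Y.hom a p y (f.app p x)) := rfl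
  have hR : ((pshf f).cograph.comp (QCat.y Y).graph).rel a b y σ =
      ⨆ c, ⨆ τ : Y.P.el c,
        Q.comp (Y.P.hom c b τ ((pshf f).app b σ)) ((QCat.y Y).graph.rel a c y τ) := rfl
  rw [hL, hR]
  refine iSup₂_le fun p x => ?_
  rw [y_graph_rel]
  have h1 : Q.comp (σ.1 p x) (Y.hom a p y (f.app p x)) ≤ ((pshf f).app b σ).1 a y :=
    le_iSup_of_le p (le_iSup_of_le x le_rfl)
  calc Q.comp (σ.1 p x) (Y.hom a p y (f.app p x))
      ≤ ((pshf f).app b σ).1 a y := h1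
    _ = Q.comp (((pshf f).app b σ).1 a y) (Q.idm a) := (Q.comp_idm _).symm
    _ ≤ Q.comp (Y.P.hom a b (Y.y.app a y) ((pshf f).app b σ))
          ((QCat.y Y).graph.rel a a y (Y.y.app a y)) := by
        refine Quantaloid.comp_le_comp ?_ ?_
        · rw [yoneda_hom]
        · rw [y_graph_rel]
          exact Y.refl a y
    _ ≤ _ := le_iSup₂_of_le a (Y.y.app a y) le_rfl

theorem ypp_comp_le {X : QCat Q} :
    (QCat.y X.P).graph.comp (QCat.y X).graph ≤ (supP X).cograph.comp (QCat.y X).graph := by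
  intro p s x XX
  have hL : ((QCat.y X.P).graph.comp (QCat.y X).graph).rel p s x XX =
      ⨆ q, ⨆ σ : X.P.el q,
        Q.comp ((QCat.y X.P).graph.rel q s σ XX) ((QCat.y X).graph.rel p q x σ) := rfl
  have hR : ((supP X).cograph.comp (QCat.y X).graph).rel p s x XX =
      ⨆ c, ⨆ τ : X.P.el c,
        Q.comp (X.P.hom c s τ ((supP X).app s XX)) ((QCat.y X).graph.rel p c x τ) := rfl
  have hS : ((supP X).app s XX).1 p x =
      ⨆ q, ⨆ σ : X.P.el q, Q.comp (XX.1 q σ) ((QCat.y X).graph.rel p q x σ) := rfl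
  rw [hL, hR]
  refine iSup₂_le fun q σ => ?_
  rw [y_graph_rel (X := X.P)]
  calc Q.comp (XX.1 q σ) ((QCat.y X).graph.rel p q x σ)
      ≤ ((supP X).app s XX).1 p x := by rw [hS]; exact le_iSup_of_le q (le_iSup_of_le σ le_rfl)
    _ = Q.comp (Q.idm s) (((supP X).app s XX).1 p x) := (Q.idm_comp _).symm
    _ ≤ Q.comp (X.P.hom s s ((supP X).app s XX) ((supP X).app s XX))
          ((QCat.y X).graph.rel p s x ((supP X).app s XX)) := by
        refine Quantaloid.comp_le_comp (X.P.refl s _) ?_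
        rw [y_graph_rel]
    _ ≤ _ := le_iSup₂_of_le s ((supP X).app s XX) le_rfl

/-- for any 2-functor `T` on `Q`-Cat, lax extensions of `T` to
`Q`-Dist correspond bijectively to families `λ = (λ_X : TPX → PTX)_X` satisfying
the laws (a), (b), (c), via `Φ : λ ↦ T̂` with `←(T̂φ) = λ_X ∘ T(←φ)` and
`Ψ : T̂ ↦ λ` with `λ_X = ←(T̂((y_X)_*))`. -/
theorem statement15 (Q : Quantaloid.{u}) (T : TwoFunctor Q) :
    (∀ lam : LamFamily T, IsDistLawABC T lam → IsLaxExt T (PhiExt T lam)) ∧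
    (∀ ext : ExtFamily T, IsLaxExt T ext → IsDistLawABC T (PsiLam T ext)) ∧
    (∀ lam : LamFamily T, IsDistLawABC T lam → PsiLam T (PhiExt T lam) = lam) ∧
    (∀ ext : ExtFamily T, IsLaxExt T ext →
      ∀ (X Y : QCat Q) (φ : QDist X Y), PhiExt T (PsiLam T ext) φ = ext φ) := by
  refine ⟨?_, ?_, ?_, ?_⟩
  -- Part 1: Φ(λ) is a lax extension
  · intro lam hABC
    refine ⟨?_, ?_, ?_⟩
    -- (1) monotone
    · intro X Y φ φ' h
      intro p q x y
      show ((lam X).app q ((T.map φ.transpose).app q y)).1 p x ≤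
          ((lam X).app q ((T.map φ'.transpose).app q y)).1 p x
      have htr : φ.transpose ≤ φ'.transpose := fun q' y' =>
        idm_le_phom_iff.mpr (fun p' x' => h p' q' x' y')
      exact papp_mono' (lam X) (T.map_mono htr q y) p x
    -- (2) lax composition
    · intro X Y Z φ ψ
      intro p r x z
      have hLHS : ((PhiExt T lam ψ).comp (PhiExt T lam φ)).rel p r x z =
          ⨆ q, ⨆ y : (T.obj Y).el q,
            Q.comp (((lam Y).app r ((T.map ψ.transpose).app r z)).1 q y)
              (((lam X).app q ((T.map φ.transpose).app q y)).1 p x) := rfl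
      rw [hLHS]
      refine iSup₂_le fun q y => ?_
      set t := (T.map ψ.transpose).app r z with ht
      set tau := (lam Y).app r t with htau
      set fm := T.map φ.transpose with hfm
      set S1 := (pshf fm).app r tau with hS1
      set S2 := (pshf (lam X)).app r S1 with hS2
      set Vv := (supP (T.obj X)).app r S2 with hVv
      have step1 : Q.comp (tau.1 q y) (((lam X).app q (fm.app q y)).1 p x) ≤ Vv.1 p x := by
        have htS : tau.1 q y ≤ S1.1 q (fm.app q y) := by
          have hSval : S1.1 q (fm.app q y) = ⨆ q₂, ⨆ y₂ : (T.obj Y).el q₂,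
              Q.comp (tau.1 q₂ y₂)
                ((T.obj X.P).hom q q₂ (fm.app q y) (fm.app q₂ y₂)) := rfl
          rw [hSval]
          refine le_trans ?_ (le_iSup₂_of_le q y le_rfl)
          calc tau.1 q y = Q.comp (tau.1 q y) (Q.idm q) := (Q.comp_idm _).symm
            _ ≤ _ := Quantaloid.comp_le_comp le_rfl ((T.obj X.P).refl q _)
        have htS2 : tau.1 q y ≤ S2.1 q ((lam X).app q (fm.app q y)) := by
          have hval : S2.1 q ((lam X).app q (fm.app q y)) =
              ⨆ q₁, ⨆ s₁ : (T.obj X.P).el q₁,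
                Q.comp (S1.1 q₁ s₁)
                  ((T.obj X).P.hom q q₁ ((lam X).app q (fm.app q y))
                    ((lam X).app q₁ s₁)) := rfl
          rw [hval]
          refine le_trans ?_ (le_iSup₂_of_le q (fm.app q y) le_rfl)
          calc tau.1 q y ≤ S1.1 q (fm.app q y) := htS
            _ = Q.comp (S1.1 q (fm.app q y)) (Q.idm q) := (Q.comp_idm _).symm
            _ ≤ _ := Quantaloid.comp_le_comp le_rfl ((T.obj X).P.refl q _)
        have hVval : Vv.1 p x = ⨆ q₀, ⨆ σ : (T.obj X).P.el q₀,
            Q.comp (S2.1 q₀ σ) ((T.obj X).y.graph.rel p q₀ x σ) := rfl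
        rw [hVval]
        refine le_trans ?_ (le_iSup₂_of_le q ((lam X).app q (fm.app q y)) le_rfl)
        rw [y_graph_rel]
        exact Quantaloid.comp_le_comp htS2 le_rfl
      have hSle : ∀ a (b : (T.obj X.P).el a), S1.1 a b ≤
          ((lam X.P).app r ((T.map (pshf φ.transpose)).app r t)).1 a b := by
        intro a b
        exact idm_le_phom_iff.mp (hABC.1 Y X.P φ.transpose r t) a b
      have hmono2 : ∀ p' (x' : (T.obj X).P.el p'), S2.1 p' x' ≤
          ((pshf (lam X)).app r
            ((lam X.P).app r ((T.map (pshf φ.transpose)).app r t))).1 p' x' :=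
        fun p' x' => papp_mono (pshf (lam X)) hSle p' x'
      have hmono3 : ∀ p' (x' : (T.obj X).el p'), Vv.1 p' x' ≤
          ((supP (T.obj X)).app r ((pshf (lam X)).app r
            ((lam X.P).app r ((T.map (pshf φ.transpose)).app r t)))).1 p' x' :=
        fun p' x' => papp_mono (supP (T.obj X)) hmono2 p' x'
      have hcp : ∀ p' (x' : (T.obj X).el p'),
          ((supP (T.obj X)).app r ((pshf (lam X)).app r
            ((lam X.P).app r ((T.map (pshf φ.transpose)).app r t)))).1 p' x' ≤
          ((lam X).app r ((T.map (supP X)).app r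
            ((T.map (pshf φ.transpose)).app r t))).1 p' x' :=
        idm_le_phom_iff.mp (hABC.2.2 X r ((T.map (pshf φ.transpose)).app r t))
      have heq : T.map ((ψ.comp φ).transpose) =
          ((T.map (supP X)).comp (T.map (pshf φ.transpose))).comp (T.map ψ.transpose) := by
        rw [transpose_qdistcomp, T.map_comp, T.map_comp]
      show Q.comp (tau.1 q y) (((lam X).app q (fm.app q y)).1 p x) ≤
          ((lam X).app r ((T.map ((ψ.comp φ).transpose)).app r z)).1 p x
      rw [heq]
      exact le_trans step1 (le_trans (hmono3 p x) (hcp p x))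
    -- (3) graphs and cographs
    · intro X Y f
      constructor
      · -- graph
        have hstep : ∀ q' (x' : (T.obj X).el q'),
            Q.idm q' ≤ ((lam X).app q'
              ((T.map f.graph.transpose).app q' ((T.map f).app q' x'))).1 q' x' := by
          intro q' x'
          have h₁ : X.y ≤ f.graph.transpose.comp f := fun p' x₀ =>
            idm_le_phom_iff.mpr (fun p'' x'' => f.mono p'' p' x'' x₀)
          have h₂ := T.map_mono h₁
          rw [T.map_comp] at h₂
          have h₃ := idm_le_phom_iff.mp (hABC.2.1 X q' x') q' x'
          calc Q.idm q' ≤ (T.obj X).hom q' q' x' x' := (T.obj X).refl q' x'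
            _ ≤ ((lam X).app q' ((T.map X.y).app q' x')).1 q' x' := h₃
            _ ≤ _ := papp_mono' (lam X) (h₂ q' x') q' x'
        intro p q xx yy
        show (T.obj Y).hom p q ((T.map f).app p xx) yy ≤
            ((lam X).app q ((T.map f.graph.transpose).app q yy)).1 p xx
        calc (T.obj Y).hom p q ((T.map f).app p xx) yy
            = Q.comp ((T.obj Y).hom p q ((T.map f).app p xx) yy) (Q.idm p) :=
              (Q.comp_idm _).symm
          _ ≤ Q.comp ((T.obj X).P.hom p q
                ((lam X).app p ((T.map f.graph.transpose).app p ((T.map f).app p xx)))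
                ((lam X).app q ((T.map f.graph.transpose).app q yy)))
              (((lam X).app p
                ((T.map f.graph.transpose).app p ((T.map f).app p xx))).1 p xx) :=
              Quantaloid.comp_le_comp
                (((lam X).comp (T.map f.graph.transpose)).mono p q ((T.map f).app p xx) yy)
                (hstep p xx)
          _ ≤ _ := phom_eval _ _ p xx
      · -- cograph
        intro p q yy xx
        show (T.obj Y).hom p q yy ((T.map f).app q xx) ≤
            ((lam Y).app q ((T.map f.cograph.transpose).app q xx)).1 p yy
        have hrw : T.map f.cograph.transpose = (T.map (QCat.y Y)).comp (T.map f) := by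
          rw [transpose_cograph, T.map_comp]
        rw [hrw]
        exact idm_le_phom_iff.mp (hABC.2.1 Y q ((T.map f).app q xx)) p yy
  -- Part 2: Ψ(ext) satisfies (a), (b), (c)
  · intro ext hext
    refine ⟨?_, ?_, ?_⟩
    -- (a)
    · intro X Y f
      refine qfun_le_iff.mpr fun s ss q yy => ?_
      have hL : (((pshf (T.map f)).comp (PsiLam T ext X)).app s ss).1 q yy =
          ⨆ p, ⨆ xx : (T.obj X).el p,
            Q.comp ((ext X.y.graph).rel p s xx ss)
              ((T.obj Y).hom q p yy ((T.map f).app p xx)) := rfl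
      rw [hL]
      refine iSup₂_le fun p xx => ?_
      have h1 : Q.comp ((ext X.y.graph).rel p s xx ss)
            ((T.obj Y).hom q p yy ((T.map f).app p xx)) ≤
          Q.comp ((ext X.y.graph).rel p s xx ss) ((ext f.cograph).rel q p yy xx) :=
        Quantaloid.comp_le_comp le_rfl ((hext.2.2 X Y f).2 q p yy xx)
      have h2 : Q.comp ((ext X.y.graph).rel p s xx ss) ((ext f.cograph).rel q p yy xx) ≤
          ((ext X.y.graph).comp (ext f.cograph)).rel q s yy ss :=
        le_iSup₂_of_le p xx le_rfl
      have h3 := hext.2.1 Y X X.P f.cograph X.y.graph q s yy ss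
      have h4 := hext.1 Y X.P _ _ (y_graph_comp_cograph_le f) q s yy ss
      have h5 := whisker_cograph_a hext (pshf f) (QCat.y Y).graph yy ss
      exact le_trans h1 (le_trans h2 (le_trans h3 (le_trans h4 h5)))
    -- (b)
    · intro X
      intro q xx
      refine idm_le_phom_iff.mpr fun p xx' => ?_
      show (T.obj X).hom p q xx' xx ≤
          (ext X.y.graph).rel p q xx' ((T.map X.y).app q xx)
      refine le_trans ((T.map X.y).mono p q xx' xx) ?_
      exact (hext.2.2 X X.P X.y).1 p q xx' ((T.map X.y).app q xx)
    -- (c)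
    · intro X
      refine qfun_le_iff.mpr fun s XX p xx => ?_
      have hL : (((supP (T.obj X)).comp ((pshf (PsiLam T ext X)).comp
            (PsiLam T ext X.P))).app s XX).1 p xx =
          ⨆ q, ⨆ σ : (T.obj X).P.el q,
            Q.comp (((pshf (PsiLam T ext X)).app s ((PsiLam T ext X.P).app s XX)).1 q σ)
              ((T.obj X).y.graph.rel p q xx σ) := rfl
      rw [hL]
      refine iSup₂_le fun q σ => ?_
      have hI : ((pshf (PsiLam T ext X)).app s ((PsiLam T ext X.P).app s XX)).1 q σ =
          ⨆ q', ⨆ st : (T.obj X.P).el q',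
            Q.comp ((ext X.P.y.graph).rel q' s st XX)
              ((T.obj X).P.hom q q' σ ((PsiLam T ext X).app q' st)) := rfl
      rw [hI, Quantaloid.iSup_comp]
      refine iSup_le fun q' => ?_
      rw [Quantaloid.iSup_comp]
      refine iSup_le fun st => ?_
      rw [Q.comp_assoc, y_graph_rel]
      have h1 : Q.comp ((T.obj X).P.hom q q' σ ((PsiLam T ext X).app q' st))
            (σ.1 p xx) ≤ ((PsiLam T ext X).app q' st).1 p xx :=
        phom_eval σ ((PsiLam T ext X).app q' st) p xx
      have h2 : Q.comp ((ext X.P.y.graph).rel q' s st XX)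
            ((ext X.y.graph).rel p q' xx st) ≤
          ((ext X.P.y.graph).comp (ext X.y.graph)).rel p s xx XX :=
        le_iSup₂_of_le q' st le_rfl
      have h3 := hext.2.1 X X.P X.P.P X.y.graph X.P.y.graph p s xx XX
      have h4 := hext.1 X X.P.P _ _ (ypp_comp_le (X := X)) p s xx XX
      have h5 := whisker_cograph_a hext (supP X) X.y.graph xx XX
      calc Q.comp ((ext X.P.y.graph).rel q' s st XX)
            (Q.comp ((T.obj X).P.hom q q' σ ((PsiLam T ext X).app q' st)) (σ.1 p xx))
          ≤ Q.comp ((ext X.P.y.graph).rel q' s st XX)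
              ((ext X.y.graph).rel p q' xx st) := Quantaloid.comp_le_comp le_rfl h1
        _ ≤ _ := le_trans h2 (le_trans h3 (le_trans h4 h5))
  -- Part 3: Ψ ∘ Φ = id
  · intro lam _hABC
    funext X
    show (PhiExt T lam X.y.graph).transpose = lam X
    unfold PhiExt
    rw [transpose_untranspose, transpose_y_graph, T.map_id, QFun.comp_id]
  -- Part 4: Φ ∘ Ψ = id
  · intro ext hext X Y φ
    apply le_antisymm
    · intro p q x y
      show (ext X.y.graph).rel p q x ((T.map φ.transpose).app q y) ≤ (ext φ).rel p q x y
      refine le_trans (whisker_cograph_b hext φ.transpose X.y.graph x y) ?_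
      exact hext.1 X Y _ _ (cograph_transpose_comp_le φ) p q x y
    · intro p q x y
      show (ext φ).rel p q x y ≤
          (ext X.y.graph).rel p q x ((T.map φ.transpose).app q y)
      refine le_trans (whisker_graph hext φ.transpose φ x y) ?_
      exact hext.1 X X.P _ _ (transpose_graph_comp_le φ) p q x ((T.map φ.transpose).app q y)


end QT
end
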